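/- arXiv:1505.07578 — 6 statements merged into one kernel-verified Lean document; each statement's English description precedes it below -/
import Mathlib

section
/- A collection 𝒞 ⊆ Set (Set ℕ) is a Π⁰₁ class that contains Set.univ and is closed under binary intersections if and only if there exists a recursively enumerable set S of nonempty lists of natural numbers with 𝒞 = V(S). -/
set_option maxHeartbeats 1000000



/-- A set `X ⊆ ℕ` satisfies the Horn implications encoded by `S`:
a list `n₀ :: t ∈ S` means `(∀ m ∈ t, m ∈ X) → n₀ ∈ X`. -/
def SatisfiesHorn (S : Set (List ℕ)) (X : Set ℕ) : Prop :=
  ∀ n₀ : ℕ, ∀ t : List ℕ, (n₀ :: t) ∈ S → (∀ m ∈ t, m ∈ X) → n₀ ∈ X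

/-- The quasivariety defined by `S`. -/
def QV (S : Set (List ℕ)) : Set (Set ℕ) := {X | SatisfiesHorn S X}

/-- The closure of `Y`: the smallest element of `QV S` containing `Y`. -/
def QVclosure (S : Set (List ℕ)) (Y : Set ℕ) : Set ℕ :=
  ⋂₀ {X | X ∈ QV S ∧ Y ⊆ X}

/-- `A` is enumeration reducible to `B` via `f`. -/
def EnumRedVia (A B : Set ℕ) (f : ℕ × ℕ → Option (Finset ℕ)) : Prop :=
  Computable f ∧
    ∀ x : ℕ, x ∈ A ↔ ∃ n : ℕ, ∃ F : Finset ℕ, f (x, n) = some F ∧ ↑F ⊆ B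

/-- `A` is enumeration reducible to `B`. -/
def EnumRed (A B : Set ℕ) : Prop := ∃ f : ℕ × ℕ → Option (Finset ℕ), EnumRedVia A B f

/-- `𝒞` is a Π⁰₁ class: there is an r.e. set of pairs of finite sets acting as
forbidden patterns (positive part / negative part). -/
def Pi01Class (𝒞 : Set (Set ℕ)) : Prop :=
  ∃ F : Set (Finset ℕ × Finset ℕ), REPred (· ∈ F) ∧
    ∀ X : Set ℕ, X ∈ 𝒞 ↔ ∀ p ∈ F, ¬((↑p.1 : Set ℕ) ⊆ X ∧ (↑p.2 : Set ℕ) ∩ X = ∅)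


section QVAuxSection
open Encodable Denumerable

theorem re_approx {α} [Primcodable α] {p : α → Prop} (hp : REPred p) :
    ∃ g : α → ℕ → Bool, Primrec₂ g ∧
      (∀ a k k', k ≤ k' → g a k = true → g a k' = true) ∧
      ∀ a, p a ↔ ∃ k, g a k = true := by
  unfold REPred at hp
  unfold Partrec at hp
  obtain ⟨c, hc⟩ := Nat.Partrec.Code.exists_code.1 hp
  refine ⟨fun a k => (Nat.Partrec.Code.evaln k c (encode a)).isSome, ?_, ?_, ?_⟩
  · exact Primrec.option_isSome.comp
      (Nat.Partrec.Code.primrec_evaln.comp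
        ((Primrec.snd.pair (Primrec.const c)).pair (Primrec.encode.comp Primrec.fst)))
  · intro a k k' hkk' h
    rw [Option.isSome_iff_exists] at h ⊢
    obtain ⟨x, hx⟩ := h
    exact ⟨x, Nat.Partrec.Code.evaln_mono hkk' hx⟩
  · intro a
    have hd : p a ↔ (c.eval (encode a)).Dom := by
      rw [hc]
      simp only [Encodable.encodek]
      simp [Part.assert, Part.Dom]
    rw [hd, Part.dom_iff_mem]
    constructor
    · rintro ⟨x, hx⟩
      obtain ⟨k, hk⟩ := Nat.Partrec.Code.evaln_complete.1 hx
      exact ⟨k, by rw [Option.isSome_iff_exists]; exact ⟨x, hk⟩⟩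
    · rintro ⟨k, hk⟩
      rw [Option.isSome_iff_exists] at hk
      obtain ⟨x, hx⟩ := hk
      exact ⟨x, Nat.Partrec.Code.evaln_complete.2 ⟨k, hx⟩⟩

theorem re_of_exists {α} [Primcodable α] {g : α → ℕ → Bool} (hg : Primrec₂ g) :
    REPred fun a => ∃ k, g a k = true := by
  have h1 : Partrec fun a => Nat.rfindOpt fun n => bif g a n then some 0 else none := by
    apply Partrec.rfindOpt
    exact Computable.cond hg.to_comp (Computable.const (some 0)) (Computable.const none)
  have h2 := h1.dom_re
  apply h2.of_eq
  intro a
  rw [Nat.rfindOpt_dom]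
  constructor
  · rintro ⟨n, x, hx⟩
    refine ⟨n, ?_⟩
    cases h : g a n with
    | false => rw [h] at hx; simp at hx
    | true => rfl
  · rintro ⟨k, hk⟩
    exact ⟨k, 0, by rw [hk]; rfl⟩



def toL (s : Finset ℕ) : List ℕ := Denumerable.raise' (Denumerable.ofNat (List ℕ) (Denumerable.eqv (Finset ℕ) s)) 0

theorem mem_toL {a : ℕ} {s : Finset ℕ} : a ∈ toL s ↔ a ∈ s := by
  unfold toL
  have h : ofNat (Finset ℕ) (Denumerable.eqv (Finset ℕ) s) = s := ofNat_encode s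
  have h2 : ofNat (Finset ℕ) (Denumerable.eqv (Finset ℕ) s)
      = Finset.map (Denumerable.eqv ℕ).symm.toEmbedding
          (Denumerable.raise'Finset (ofNat (List ℕ) (Denumerable.eqv (Finset ℕ) s)) 0) := rfl
  have h3 : ∀ x : ℕ, (Denumerable.eqv ℕ).symm x = x := fun x => by
    simp [Denumerable.eqv]
  rw [h2] at h
  conv_rhs => rw [← h]
  simp only [Finset.mem_map, Denumerable.raise'Finset, Finset.mem_mk, Multiset.mem_coe,
    Function.Embedding.coeFn_mk, Equiv.coe_toEmbedding, h3]
  constructor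
  · intro ha; exact ⟨a, ha, rfl⟩
  · rintro ⟨b, hb, e⟩; rwa [← e]

private def rstep : ℕ × List ℕ → ℕ → ℕ × List ℕ := fun st m => (m + st.1 + 1, st.2 ++ [m + st.1])

private theorem raise'_foldl (l : List ℕ) : ∀ (n : ℕ) (acc : List ℕ),
    (l.foldl rstep (n, acc)).2 = acc ++ Denumerable.raise' l n := by
  induction l with
  | nil => intro n acc; simp [Denumerable.raise']
  | cons m l ih =>
    intro n acc
    simp only [List.foldl_cons, Denumerable.raise', rstep, ih]
    simp

theorem toL_primrec : Primrec toL := by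
  have h1 : Primrec (fun s : Finset ℕ => Denumerable.ofNat (List ℕ) (Denumerable.eqv (Finset ℕ) s)) :=
    (Primrec.ofNat (List ℕ)).comp Primrec.encode
  have hstep : Primrec₂ (fun (_ : Finset ℕ) (q : (ℕ × List ℕ) × ℕ) => rstep q.1 q.2) :=
    Primrec₂.mk <| Primrec.pair
      (Primrec.succ.comp ((Primrec.nat_add.comp (Primrec.snd.comp Primrec.snd)
        (Primrec.fst.comp (Primrec.fst.comp Primrec.snd)))))
      (Primrec.list_concat.comp (Primrec.snd.comp (Primrec.fst.comp Primrec.snd))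
        (Primrec.nat_add.comp (Primrec.snd.comp Primrec.snd)
          (Primrec.fst.comp (Primrec.fst.comp Primrec.snd))))
  have h2 : Primrec (fun s : Finset ℕ =>
      ((Denumerable.ofNat (List ℕ) (Denumerable.eqv (Finset ℕ) s)).foldl
        (fun st m => rstep st m) ((0 : ℕ), ([] : List ℕ))).2) :=
    Primrec.snd.comp (Primrec.list_foldl h1 (Primrec.const ((0 : ℕ), ([] : List ℕ))) hstep)
  exact h2.of_eq fun s => by rw [show (fun st m => rstep st m) = rstep from rfl, raise'_foldl]; simp [toL]

/-! ### Bool-valued list primitives -/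

def memB (Y : List ℕ) (a : ℕ) : Bool := Y.foldr (fun x r => (a == x) || r) false

theorem memB_iff {Y : List ℕ} {a : ℕ} : memB Y a = true ↔ a ∈ Y := by
  induction Y with
  | nil => simp [memB]
  | cons x t ih =>
    show ((a == x) || memB t a) = true ↔ a ∈ x :: t
    simp [ih]

theorem memB_primrec : Primrec₂ memB :=
  Primrec₂.mk <|
    (Primrec.list_foldr (f := fun p : List ℕ × ℕ => p.1) (g := fun _ => false)
      (h := fun p q => (p.2 == q.1) || q.2) Primrec.fst (Primrec.const false)
      (Primrec₂.mk <| Primrec.or.comp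
        (Primrec.beq.comp (Primrec.snd.comp Primrec.fst) (Primrec.fst.comp Primrec.snd))
        (Primrec.snd.comp Primrec.snd))).of_eq fun p => rfl

def subB (A Y : List ℕ) : Bool := A.foldr (fun x r => memB Y x && r) true

def intB (B Y : List ℕ) : Bool := B.foldr (fun x r => memB Y x || r) false

theorem subB_iff {A Y : List ℕ} : subB A Y = true ↔ ∀ x ∈ A, x ∈ Y := by
  induction A with
  | nil => simp [subB]
  | cons x t ih =>
    show (memB Y x && subB t Y) = true ↔ _
    simp [ih, memB_iff]

theorem intB_iff {B Y : List ℕ} : intB B Y = true ↔ ∃ x ∈ B, x ∈ Y := by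
  induction B with
  | nil => simp [intB]
  | cons x t ih =>
    show (memB Y x || intB t Y) = true ↔ _
    simp [ih, memB_iff]

theorem subB_primrec : Primrec₂ subB :=
  Primrec₂.mk <|
    (Primrec.list_foldr (f := fun p : List ℕ × List ℕ => p.1) (g := fun _ => true)
      (h := fun p q => memB p.2 q.1 && q.2) Primrec.fst (Primrec.const true)
      (Primrec₂.mk <| Primrec.and.comp
        (memB_primrec.comp (Primrec.snd.comp Primrec.fst) (Primrec.fst.comp Primrec.snd))
        (Primrec.snd.comp Primrec.snd))).of_eq fun p => rfl

theorem intB_primrec : Primrec₂ intB :=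
  Primrec₂.mk <|
    (Primrec.list_foldr (f := fun p : List ℕ × List ℕ => p.1) (g := fun _ => false)
      (h := fun p q => memB p.2 q.1 || q.2) Primrec.fst (Primrec.const false)
      (Primrec₂.mk <| Primrec.or.comp
        (memB_primrec.comp (Primrec.snd.comp Primrec.fst) (Primrec.fst.comp Primrec.snd))
        (Primrec.snd.comp Primrec.snd))).of_eq fun p => rfl

def satB (c : List ℕ × List ℕ) (Y : List ℕ) : Bool := !(subB c.1 Y) || intB c.2 Y

theorem satB_iff {c : List ℕ × List ℕ} {Y : List ℕ} :
    satB c Y = true ↔ ((∀ x ∈ c.1, x ∈ Y) → ∃ x ∈ c.2, x ∈ Y) := by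
  simp only [satB, Bool.or_eq_true, Bool.not_eq_true']
  constructor
  · rintro (h | h) hsub
    · exact absurd (subB_iff.2 hsub) (by simp [h])
    · exact intB_iff.1 h
  · intro h
    by_cases hs : subB c.1 Y = true
    · exact Or.inr (intB_iff.2 (h (subB_iff.1 hs)))
    · exact Or.inl (by simpa using hs)

theorem satB_primrec : Primrec₂ satB :=
  Primrec₂.mk <| Primrec.or.comp
    (Primrec.not.comp (subB_primrec.comp (Primrec.fst.comp Primrec.fst) Primrec.snd))
    (intB_primrec.comp (Primrec.snd.comp Primrec.fst) Primrec.snd)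

def satsB (L : List (List ℕ × List ℕ)) (Y : List ℕ) : Bool := L.foldr (fun c r => satB c Y && r) true

theorem satsB_iff {L : List (List ℕ × List ℕ)} {Y : List ℕ} :
    satsB L Y = true ↔ ∀ c ∈ L, satB c Y = true := by
  induction L with
  | nil => simp [satsB]
  | cons c t ih =>
    show (satB c Y && satsB t Y) = true ↔ _
    simp [ih]

theorem satsB_primrec : Primrec₂ satsB :=
  Primrec₂.mk <|
    (Primrec.list_foldr (f := fun p : List (List ℕ × List ℕ) × List ℕ => p.1) (g := fun _ => true)
      (h := fun p q => satB q.1 p.2 && q.2) Primrec.fst (Primrec.const true)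
      (Primrec₂.mk <| Primrec.and.comp
        (satB_primrec.comp (Primrec.fst.comp Primrec.snd) (Primrec.snd.comp Primrec.fst))
        (Primrec.snd.comp Primrec.snd))).of_eq fun p => rfl

def varsOf (L : List (List ℕ × List ℕ)) : List ℕ := L.foldr (fun c r => c.1 ++ c.2 ++ r) []

theorem mem_varsOf {L : List (List ℕ × List ℕ)} {a : ℕ} :
    a ∈ varsOf L ↔ ∃ c ∈ L, a ∈ c.1 ++ c.2 := by
  induction L with
  | nil => simp [varsOf]
  | cons c t ih =>
    show a ∈ c.1 ++ c.2 ++ varsOf t ↔ _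
    simp only [List.mem_append] at ih ⊢
    rw [ih]
    simp only [List.mem_cons]
    constructor
    · rintro ((h | h) | ⟨d, hd, h⟩)
      · exact ⟨c, Or.inl rfl, Or.inl h⟩
      · exact ⟨c, Or.inl rfl, Or.inr h⟩
      · exact ⟨d, Or.inr hd, h⟩
    · rintro ⟨d, (rfl | hd), h⟩
      · exact Or.inl h
      · exact Or.inr ⟨d, hd, h⟩

theorem varsOf_primrec : Primrec varsOf :=
  (Primrec.list_foldr (f := fun L : List (List ℕ × List ℕ) => L) (g := fun _ => ([] : List ℕ))
    (h := fun _ q => q.1.1 ++ q.1.2 ++ q.2) Primrec.id (Primrec.const [])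
    (Primrec₂.mk <| Primrec.list_append.comp
      (Primrec.list_append.comp (Primrec.fst.comp (Primrec.fst.comp Primrec.snd))
        (Primrec.snd.comp (Primrec.fst.comp Primrec.snd)))
      (Primrec.snd.comp Primrec.snd))).of_eq fun L => rfl

def subl (l : List ℕ) : List (List ℕ) := l.foldr (fun a acc => acc ++ acc.map (a :: ·)) [[]]

theorem subl_eq (l : List ℕ) : subl l = l.sublists' := by
  induction l with
  | nil => simp [subl]
  | cons a t ih => simp only [subl, List.foldr_cons] at ih ⊢; rw [ih, List.sublists'_cons]

theorem mem_subl {Y l : List ℕ} : Y ∈ subl l ↔ List.Sublist Y l := by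
  rw [subl_eq, List.mem_sublists']

theorem subl_primrec : Primrec subl :=
  (Primrec.list_foldr (f := fun l : List ℕ => l) (g := fun _ => ([[]] : List (List ℕ)))
    (h := fun _ q => q.2 ++ q.2.map (q.1 :: ·)) Primrec.id (Primrec.const [[]])
    (Primrec₂.mk <| Primrec.list_append.comp (Primrec.snd.comp Primrec.snd)
      (Primrec.list_map (Primrec.snd.comp Primrec.snd)
        (Primrec₂.mk <| Primrec.list_cons.comp (Primrec.fst.comp (Primrec.snd.comp Primrec.fst))
          Primrec.snd)))).of_eq fun l => rfl



theorem foldr_and_iff {β : Type*} (L : List β) (p : β → Bool) :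
    (L.foldr (fun x r => p x && r) true = true) ↔ ∀ x ∈ L, p x = true := by
  induction L with
  | nil => simp
  | cons x t ih => simp [ih]

theorem impB {x y z : Bool} : ((!(x && y)) || z) = true ↔ (x = true → y = true → z = true) := by
  cases x <;> cases y <;> cases z <;> simp

/-- decode a pair of finsets from a natural number -/
def pdec (i : ℕ) : Finset ℕ × Finset ℕ :=
  (ofNat (Finset ℕ) i.unpair.1, ofNat (Finset ℕ) i.unpair.2)

theorem pdec_primrec : Primrec pdec :=
  Primrec.pair
    ((Primrec.ofNat (Finset ℕ)).comp (Primrec.fst.comp Primrec.unpair))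
    ((Primrec.ofNat (Finset ℕ)).comp (Primrec.snd.comp Primrec.unpair))

theorem pdec_surj (p : Finset ℕ × Finset ℕ) :
    pdec (Nat.pair (Denumerable.eqv (Finset ℕ) p.1) (Denumerable.eqv (Finset ℕ) p.2)) = p := by
  rcases p with ⟨A, B⟩
  simp only [pdec, Nat.unpair_pair]
  have h1 : ofNat (Finset ℕ) ((Denumerable.eqv (Finset ℕ)) A) = A := ofNat_encode A
  have h2 : ofNat (Finset ℕ) ((Denumerable.eqv (Finset ℕ)) B) = B := ofNat_encode B
  rw [h1, h2]

/-- the finite list of (list-encoded) clauses of `F` enumerated by stage `k` -/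
def stage (gF : Finset ℕ × Finset ℕ → ℕ → Bool) (k : ℕ) : List (List ℕ × List ℕ) :=
  (List.range k).foldr (fun i acc =>
    bif gF (pdec i) k then (toL (pdec i).1, toL (pdec i).2) :: acc else acc) []

theorem stage_primrec {gF : Finset ℕ × Finset ℕ → ℕ → Bool} (h : Primrec₂ gF) :
    Primrec (stage gF) := by
  have hh : Primrec₂ (fun (k : ℕ) (q : ℕ × List (List ℕ × List ℕ)) =>
      bif gF (pdec q.1) k then (toL (pdec q.1).1, toL (pdec q.1).2) :: q.2 else q.2) := by
    apply Primrec₂.mk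
    exact Primrec.cond
      (h.comp (pdec_primrec.comp (Primrec.fst.comp Primrec.snd)) Primrec.fst)
      (Primrec.list_cons.comp
        (Primrec.pair
          (toL_primrec.comp (Primrec.fst.comp (pdec_primrec.comp (Primrec.fst.comp Primrec.snd))))
          (toL_primrec.comp (Primrec.snd.comp (pdec_primrec.comp (Primrec.fst.comp Primrec.snd)))))
        (Primrec.snd.comp Primrec.snd))
      (Primrec.snd.comp Primrec.snd)
  exact (Primrec.list_foldr (f := fun k : ℕ => List.range k) (g := fun _ => [])
    Primrec.list_range (Primrec.const []) hh).of_eq fun k => rfl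

theorem mem_stage {gF : Finset ℕ × Finset ℕ → ℕ → Bool} {c : List ℕ × List ℕ} {k : ℕ} :
    c ∈ stage gF k ↔ ∃ i < k, gF (pdec i) k = true ∧ c = (toL (pdec i).1, toL (pdec i).2) := by
  have key : ∀ l : List ℕ,
      (c ∈ l.foldr (fun i acc =>
        bif gF (pdec i) k then (toL (pdec i).1, toL (pdec i).2) :: acc else acc) [])
      ↔ ∃ i ∈ l, gF (pdec i) k = true ∧ c = (toL (pdec i).1, toL (pdec i).2) := by
    intro l
    induction l with
    | nil => simp
    | cons i t ih =>
      cases h : gF (pdec i) k with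
      | false =>
        simp only [List.foldr_cons, h, cond_false, ih, List.mem_cons]
        constructor
        · rintro ⟨j, hj, hgf, e⟩; exact ⟨j, Or.inr hj, hgf, e⟩
        · rintro ⟨j, (rfl | hj), hgf, e⟩
          · rw [h] at hgf; cases hgf
          · exact ⟨j, hj, hgf, e⟩
      | true =>
        simp only [List.foldr_cons, h, cond_true, List.mem_cons, ih]
        constructor
        · rintro (rfl | ⟨j, hj, hgf, e⟩)
          · exact ⟨i, Or.inl rfl, h, rfl⟩
          · exact ⟨j, Or.inr hj, hgf, e⟩
        · rintro ⟨j, (rfl | hj), hgf, e⟩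
          · exact Or.inl e
          · exact Or.inr ⟨j, hj, hgf, e⟩
  rw [stage, key (List.range k)]
  simp [List.mem_range]

theorem stage_sound {gF : Finset ℕ × Finset ℕ → ℕ → Bool} {c : List ℕ × List ℕ} {k : ℕ}
    (h : c ∈ stage gF k) : ∃ p : Finset ℕ × Finset ℕ, gF p k = true ∧ c = (toL p.1, toL p.2) := by
  obtain ⟨i, _, hg, he⟩ := mem_stage.1 h
  exact ⟨pdec i, hg, he⟩

theorem stage_complete {gF : Finset ℕ × Finset ℕ → ℕ → Bool} {p : Finset ℕ × Finset ℕ} {k : ℕ}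
    (h : gF p k = true)
    (hk : Nat.pair (Denumerable.eqv (Finset ℕ) p.1) (Denumerable.eqv (Finset ℕ) p.2) < k) :
    (toL p.1, toL p.2) ∈ stage gF k := by
  rw [mem_stage]
  refine ⟨_, hk, ?_, ?_⟩ <;> rw [pdec_surj p]
  · exact h

/-- the checker: `checkB gF (b :: t) k` holds iff the clauses enumerated into `F` by stage `k`
(propositionally) entail the Horn clause `t → b`. -/
def checkB (gF : Finset ℕ × Finset ℕ → ℕ → Bool) : List ℕ → ℕ → Bool
  | [], _ => false
  | b :: t, k =>
      (subl ((b :: t) ++ varsOf (stage gF k))).foldr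
        (fun Y r => ((!(satsB (stage gF k) Y && subB t Y)) || memB Y b) && r) true

theorem checkB_primrec {gF : Finset ℕ × Finset ℕ → ℕ → Bool} (h : Primrec₂ gF) :
    Primrec₂ (checkB gF) := by
  have hstage := stage_primrec h
  -- inner foldr function
  have hbody : Primrec (fun a : (List ℕ × ℕ) × ℕ × List ℕ =>
      (subl ((a.2.1 :: a.2.2) ++ varsOf (stage gF a.1.2))).foldr
        (fun Y r => ((!(satsB (stage gF a.1.2) Y && subB a.2.2 Y)) || memB Y a.2.1) && r) true) := by
    have hV : Primrec (fun a : (List ℕ × ℕ) × ℕ × List ℕ =>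
        subl ((a.2.1 :: a.2.2) ++ varsOf (stage gF a.1.2))) :=
      subl_primrec.comp (Primrec.list_append.comp
        (Primrec.list_cons.comp (Primrec.fst.comp Primrec.snd) (Primrec.snd.comp Primrec.snd))
        (varsOf_primrec.comp (hstage.comp (Primrec.snd.comp Primrec.fst))))
    exact (Primrec.list_foldr (g := fun _ => true)
      (h := fun a q => ((!(satsB (stage gF a.1.2) q.1 && subB a.2.2 q.1)) || memB q.1 a.2.1) && q.2)
      hV (Primrec.const true)
      (Primrec₂.mk <| Primrec.and.comp
        (Primrec.or.comp
          (Primrec.not.comp (Primrec.and.comp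
            (satsB_primrec.comp
              (hstage.comp (Primrec.snd.comp (Primrec.fst.comp Primrec.fst)))
              (Primrec.fst.comp Primrec.snd))
            (subB_primrec.comp (Primrec.snd.comp (Primrec.snd.comp Primrec.fst))
              (Primrec.fst.comp Primrec.snd))))
          (memB_primrec.comp (Primrec.fst.comp Primrec.snd)
            (Primrec.fst.comp (Primrec.snd.comp Primrec.fst))))
        (Primrec.snd.comp Primrec.snd))).of_eq fun a => rfl
  apply Primrec₂.mk
  have := Primrec.list_casesOn (f := fun q : List ℕ × ℕ => q.1)
    (g := fun _ => false)
    (h := fun q bt =>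
      (subl ((bt.1 :: bt.2) ++ varsOf (stage gF q.2))).foldr
        (fun Y r => ((!(satsB (stage gF q.2) Y && subB bt.2 Y)) || memB Y bt.1) && r) true)
    Primrec.fst (Primrec.const false)
    (Primrec₂.mk <| hbody.of_eq fun a => rfl)
  exact this.of_eq fun q => by
    rcases q with ⟨l, k⟩
    cases l <;> rfl

theorem checkB_iff {gF : Finset ℕ × Finset ℕ → ℕ → Bool} {b : ℕ} {t : List ℕ} {k : ℕ} :
    checkB gF (b :: t) k = true ↔
      ∀ Y : List ℕ, List.Sublist Y ((b :: t) ++ varsOf (stage gF k)) →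
        satsB (stage gF k) Y = true → subB t Y = true → memB Y b = true := by
  show (List.foldr _ true _ = true) ↔ _
  rw [foldr_and_iff]
  constructor
  · intro h Y hY h1 h2
    exact impB.1 (h Y (mem_subl.2 hY)) h1 h2
  · intro h Y hY
    exact impB.2 (fun h1 h2 => h Y (mem_subl.1 hY) h1 h2)



def nepB : List ℕ → Bool
  | [] => false
  | _ :: _ => true

theorem nepB_iff {l : List ℕ} : nepB l = true ↔ l ≠ [] := by
  cases l <;> simp [nepB]

theorem nepB_primrec : Primrec nepB :=
  (Primrec.list_casesOn (f := fun l : List ℕ => l) (g := fun _ => false)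
    (h := fun _ _ => true) Primrec.id (Primrec.const false)
    (Primrec₂.mk (Primrec.const true))).of_eq fun l => by cases l <;> rfl

def eqsB (a b : List ℕ) : Bool := subB a b && subB b a

theorem eqsB_iff {a b : List ℕ} : eqsB a b = true ↔ ∀ m, m ∈ a ↔ m ∈ b := by
  simp only [eqsB, Bool.and_eq_true, subB_iff]
  constructor
  · rintro ⟨h1, h2⟩ m; exact ⟨h1 m, h2 m⟩
  · intro h; exact ⟨fun m hm => (h m).1 hm, fun m hm => (h m).2 hm⟩

theorem eqsB_primrec : Primrec₂ eqsB :=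
  Primrec₂.mk <| Primrec.and.comp
    (subB_primrec.comp Primrec.fst Primrec.snd)
    (subB_primrec.comp Primrec.snd Primrec.fst)

def hornB (gS : List ℕ → ℕ → Bool) (p : Finset ℕ × Finset ℕ) (c : ℕ) : Bool :=
  nepB (ofNat (List ℕ) c.unpair.2) && gS (ofNat (List ℕ) c.unpair.2) c.unpair.1 &&
    eqsB (toL p.1) (ofNat (List ℕ) c.unpair.2).tail &&
    eqsB (toL p.2) [(ofNat (List ℕ) c.unpair.2).headI]

theorem hornB_primrec {gS : List ℕ → ℕ → Bool} (h : Primrec₂ gS) : Primrec₂ (hornB gS) := by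
  have hl : Primrec (fun q : (Finset ℕ × Finset ℕ) × ℕ => ofNat (List ℕ) q.2.unpair.2) :=
    (Primrec.ofNat (List ℕ)).comp (Primrec.snd.comp (Primrec.unpair.comp Primrec.snd))
  exact Primrec₂.mk <| Primrec.and.comp
    (Primrec.and.comp
      (Primrec.and.comp (nepB_primrec.comp hl)
        (h.comp hl (Primrec.fst.comp (Primrec.unpair.comp Primrec.snd))))
      (eqsB_primrec.comp (toL_primrec.comp (Primrec.fst.comp Primrec.fst))
        (Primrec.list_tail.comp hl)))
    (eqsB_primrec.comp (toL_primrec.comp (Primrec.snd.comp Primrec.fst))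
      (Primrec.list_cons.comp (Primrec.list_headI.comp hl) (Primrec.const [])))


/-- A Π⁰₁ class containing `Set.univ` and closed under binary intersections is
exactly a quasivariety defined by an r.e. set of nonempty lists. -/
theorem pi01_iff_quasivariety (𝒞 : Set (Set ℕ)) :
    (Pi01Class 𝒞 ∧ Set.univ ∈ 𝒞 ∧ ∀ X ∈ 𝒞, ∀ Y ∈ 𝒞, X ∩ Y ∈ 𝒞) ↔
    (∃ S : Set (List ℕ), (∀ l ∈ S, l ≠ []) ∧ REPred (· ∈ S) ∧ 𝒞 = QV S) := by

  constructor
  · rintro ⟨⟨F, hFre, hF⟩, huniv, hinter⟩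
    obtain ⟨gF, hgFp, hgFm, hgFiff⟩ := re_approx hFre
    -- the closure of any set belongs to 𝒞
    have hcl : ∀ W : Set ℕ, (⋂₀ {Z | Z ∈ 𝒞 ∧ W ⊆ Z}) ∈ 𝒞 := by
      intro W
      rw [hF]
      intro p hp
      rintro ⟨h1, h2⟩
      have main : ∀ s : Finset ℕ, ↑s ⊆ (↑p.2 : Set ℕ) →
          ∃ Z, (Z ∈ 𝒞 ∧ W ⊆ Z) ∧ ∀ b ∈ s, b ∉ Z := by
        intro s
        induction s using Finset.induction with
        | empty => exact fun _ => ⟨Set.univ, ⟨huniv, Set.subset_univ _⟩, by simp⟩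
        | @insert b s hb ih =>
          intro hs
          obtain ⟨Z1, hZ1, hZ1b⟩ := ih (fun x hx => hs (by simp [hx]))
          have hbp2 : b ∈ (↑p.2 : Set ℕ) := hs (by simp)
          have hbnot : b ∉ ⋂₀ {Z | Z ∈ 𝒞 ∧ W ⊆ Z} := by
            intro hbin
            exact (Set.eq_empty_iff_forall_notMem.1 h2 b) ⟨hbp2, hbin⟩
          have : ∃ Z2, (Z2 ∈ 𝒞 ∧ W ⊆ Z2) ∧ b ∉ Z2 := by
            by_contra hno
            push_neg at hno
            exact hbnot (Set.mem_sInter.2 fun Z hZ => hno Z hZ)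
          obtain ⟨Z2, hZ2, hZ2b⟩ := this
          refine ⟨Z1 ∩ Z2, ⟨hinter _ hZ1.1 _ hZ2.1, fun x hx => ⟨hZ1.2 hx, hZ2.2 hx⟩⟩, ?_⟩
          intro x hx
          rcases Finset.mem_insert.1 hx with rfl | hx
          · exact fun hxin => hZ2b hxin.2
          · exact fun hxin => hZ1b x hx hxin.1
      obtain ⟨Z, hZ, hZb⟩ := main p.2 (fun x hx => hx)
      have hclause := (hF Z).1 hZ.1 p hp
      apply hclause
      constructor
      · exact fun x hx => Set.mem_sInter.1 (h1 hx) Z hZ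
      · rw [Set.eq_empty_iff_forall_notMem]
        rintro x ⟨hx2, hxZ⟩
        exact hZb x hx2 hxZ
    -- soundness of the checker
    have sound : ∀ b t k, checkB gF (b :: t) k = true →
        ∀ X, X ∈ 𝒞 → (∀ m ∈ t, m ∈ X) → b ∈ X := by
      intro b t k hk X hX hT
      classical
      set L := stage gF k with hL
      set V := (b :: t) ++ varsOf L with hV
      set Y := V.filter (fun m => decide (m ∈ X)) with hY
      have hmemY : ∀ m, m ∈ Y ↔ m ∈ V ∧ m ∈ X := by
        intro m; simp [hY, List.mem_filter]
      have hsub : subB t Y = true := by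
        rw [subB_iff]
        intro m hm
        exact (hmemY m).2 ⟨List.mem_append.2 (Or.inl (List.mem_cons_of_mem b hm)), hT m hm⟩
      have hsats : satsB L Y = true := by
        rw [satsB_iff]
        intro c hc
        obtain ⟨p, hgp, rfl⟩ := stage_sound hc
        rw [satB_iff]
        intro hp1Y
        have hpF : p ∈ F := (hgFiff p).2 ⟨k, hgp⟩
        have hp1X : (↑p.1 : Set ℕ) ⊆ X := fun x hx =>
          ((hmemY x).1 (hp1Y x (mem_toL.2 hx))).2
        have hclause := (hF X).1 hX p hpF
        have hne : (↑p.2 : Set ℕ) ∩ X ≠ ∅ := fun he => hclause ⟨hp1X, he⟩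
        obtain ⟨x, hx2, hxX⟩ := Set.nonempty_iff_ne_empty.2 hne
        refine ⟨x, mem_toL.2 hx2, (hmemY x).2 ⟨?_, hxX⟩⟩
        exact List.mem_append.2 (Or.inr (mem_varsOf.2 ⟨_, hc, List.mem_append.2 (Or.inr (mem_toL.2 hx2))⟩))
      have hb := checkB_iff.1 hk Y (List.filter_sublist (l := V)) hsats hsub
      exact ((hmemY b).1 (memB_iff.1 hb)).2
    -- completeness of the checker
    have compl : ∀ b t, (∀ X, X ∈ 𝒞 → (∀ m ∈ t, m ∈ X) → b ∈ X) →
        ∃ k, checkB gF (b :: t) k = true := by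
      intro b t hent
      by_contra hnone
      push_neg at hnone
      have hYex : ∀ k, ∃ Y, List.Sublist Y ((b :: t) ++ varsOf (stage gF k)) ∧
          satsB (stage gF k) Y = true ∧ subB t Y = true ∧ memB Y b = false := by
        intro k
        by_contra hno
        push_neg at hno
        apply hnone k
        rw [checkB_iff]
        intro Y hY hs hsubt
        cases hmb : memB Y b with
        | true => rfl
        | false => exact absurd hmb (hno Y hY hs hsubt)
      choose Y hY1 hY2 hY3 hY4 using hYex
      set U := Filter.hyperfilter ℕ with hU
      set X := {m : ℕ | {k | m ∈ Y k} ∈ (U : Filter ℕ)} with hX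
      have htX : ∀ m ∈ t, m ∈ X := by
        intro m hm
        exact Filter.univ_mem' fun k => subB_iff.1 (hY3 k) m hm
      have hbX : b ∉ X := by
        intro hb
        have hempty : {k | b ∈ Y k} = (∅ : Set ℕ) := by
          rw [Set.eq_empty_iff_forall_notMem]
          intro k hk
          have h' := memB_iff.2 (hk : b ∈ Y k)
          rw [hY4 k] at h'
          cases h'
        rw [hX] at hb
        simp only [Set.mem_setOf_eq, hempty] at hb
        exact Filter.empty_notMem _ hb
      have hXC : X ∈ 𝒞 := by
        rw [hF]
        intro p hpF
        rintro ⟨hp1, hp2⟩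
        obtain ⟨k₁, hk₁⟩ := (hgFiff p).1 hpF
        set k₀ := max k₁ (Nat.pair (Denumerable.eqv (Finset ℕ) p.1) (Denumerable.eqv (Finset ℕ) p.2) + 1) with hk₀
        have hin : ∀ k, k₀ ≤ k → (toL p.1, toL p.2) ∈ stage gF k := by
          intro k hk
          exact stage_complete (hgFm p k₁ k (le_trans (le_max_left _ _) hk) hk₁)
            (Nat.lt_of_lt_of_le (Nat.lt_succ_self _) (le_trans (le_max_right _ _) hk))
        have hcof : {k | k₀ ≤ k} ∈ (U : Filter ℕ) := by
          apply Filter.mem_hyperfilter_of_finite_compl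
          have hc : {k | k₀ ≤ k}ᶜ = Set.Iio k₀ := by
            ext x; simp [not_le]
          rw [hc]
          exact Set.finite_Iio k₀
        have hiI : (⋂ m ∈ (↑p.1 : Set ℕ), {k | m ∈ Y k}) ∈ (U : Filter ℕ) := by
          rw [Filter.biInter_mem (p.1.finite_toSet)]
          intro m hm
          exact hp1 hm
        have hA := Filter.inter_mem hcof hiI
        have hsubU : ({k | k₀ ≤ k} ∩ ⋂ m ∈ (↑p.1 : Set ℕ), {k | m ∈ Y k}) ⊆
            ⋃ x ∈ (↑p.2 : Set ℕ), {k | x ∈ Y k} := by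
          rintro k ⟨hk0, hkI⟩
          have hsats := satsB_iff.1 (hY2 k) _ (hin k hk0)
          have hex := satB_iff.1 hsats (fun x hx => by
            have hxp1 : x ∈ (↑p.1 : Set ℕ) := mem_toL.1 hx
            exact Set.mem_iInter₂.1 hkI x hxp1)
          obtain ⟨x, hx2, hxY⟩ := hex
          exact Set.mem_biUnion (mem_toL.1 hx2) hxY
        have hU2 : (⋃ x ∈ (↑p.2 : Set ℕ), {k | x ∈ Y k}) ∈ U :=
          Filter.mem_of_superset hA hsubU
        obtain ⟨x, hx2, hxU⟩ := (Ultrafilter.finite_biUnion_mem_iff (p.2.finite_toSet)).1 hU2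
        exact (Set.eq_empty_iff_forall_notMem.1 hp2 x) ⟨hx2, hxU⟩
      exact hbX (hent X hXC htX)
    refine ⟨{l | ∃ k, checkB gF l k = true}, ?_, ?_, ?_⟩
    · rintro l ⟨k, hk⟩ rfl
      simp [checkB] at hk
    · exact re_of_exists (checkB_primrec hgFp)
    · ext X
      constructor
      · intro hX
        intro n t hnt hT
        obtain ⟨k, hk⟩ := hnt
        exact sound n t k hk X hX hT
      · intro hX
        rw [hF]
        intro p hpF
        rintro ⟨hp1, hp2⟩
        set W := (↑p.1 : Set ℕ) with hW
        have hclW := hcl W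
        have hWsub : W ⊆ ⋂₀ {Z | Z ∈ 𝒞 ∧ W ⊆ Z} := fun x hx =>
          Set.mem_sInter.2 fun Z hZ => hZ.2 hx
        have hclause := (hF _).1 hclW p hpF
        have hne : (↑p.2 : Set ℕ) ∩ ⋂₀ {Z | Z ∈ 𝒞 ∧ W ⊆ Z} ≠ ∅ := fun he =>
          hclause ⟨hWsub, he⟩
        obtain ⟨bb, hb2, hbcl⟩ := Set.nonempty_iff_ne_empty.2 hne
        have hEnt : ∀ Z, Z ∈ 𝒞 → (∀ m ∈ toL p.1, m ∈ Z) → bb ∈ Z := by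
          intro Z hZ hm
          exact Set.mem_sInter.1 hbcl Z ⟨hZ, fun x hx => hm x (mem_toL.2 hx)⟩
        obtain ⟨k, hk⟩ := compl bb (toL p.1) hEnt
        have hbbX : bb ∈ X := hX bb (toL p.1) ⟨k, hk⟩ (fun m hm => hp1 (mem_toL.1 hm))
        exact (Set.eq_empty_iff_forall_notMem.1 hp2 bb) ⟨hb2, hbbX⟩
  · rintro ⟨S, hne, hre, rfl⟩
    obtain ⟨gS, hgSp, hgSm, hgSiff⟩ := re_approx hre
    refine ⟨?_, ?_, ?_⟩
    · -- Π⁰₁ class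
      refine ⟨{p | ∃ c, hornB gS p c = true}, re_of_exists (hornB_primrec hgSp), ?_⟩
      have hmemF : ∀ p : Finset ℕ × Finset ℕ, (∃ c, hornB gS p c = true) ↔
          ∃ l ∈ S, l ≠ [] ∧ (∀ m : ℕ, m ∈ p.1 ↔ m ∈ l.tail) ∧
            (∀ m : ℕ, m ∈ p.2 ↔ m = l.headI) := by
        intro p
        constructor
        · rintro ⟨c, hc⟩
          rw [hornB] at hc
          simp only [Bool.and_eq_true] at hc
          obtain ⟨⟨⟨h1, h2⟩, h3⟩, h4⟩ := hc
          refine ⟨ofNat (List ℕ) c.unpair.2, (hgSiff _).2 ⟨c.unpair.1, h2⟩, nepB_iff.1 h1, ?_, ?_⟩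
          · intro m
            rw [← mem_toL (s := p.1), eqsB_iff.1 h3 m]
          · intro m
            rw [← mem_toL (s := p.2), eqsB_iff.1 h4 m, List.mem_singleton]
        · rintro ⟨l, hlS, hlne, hm1, hm2⟩
          obtain ⟨k, hk⟩ := (hgSiff l).1 hlS
          refine ⟨Nat.pair k (Denumerable.eqv (List ℕ) l), ?_⟩
          have hofl : ofNat (List ℕ) (Nat.pair k (Denumerable.eqv (List ℕ) l)).unpair.2 = l := by
            rw [Nat.unpair_pair]
            exact ofNat_encode l
          have hofk : (Nat.pair k (Denumerable.eqv (List ℕ) l)).unpair.1 = k := by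
            rw [Nat.unpair_pair]
          rw [hornB, hofl, hofk]
          simp only [Bool.and_eq_true]
          refine ⟨⟨⟨nepB_iff.2 hlne, hk⟩, eqsB_iff.2 ?_⟩, eqsB_iff.2 ?_⟩
          · intro m; rw [mem_toL]; exact hm1 m
          · intro m; rw [mem_toL, List.mem_singleton]; exact hm2 m
      intro X
      constructor
      · intro hX p hp
        rintro ⟨hp1, hp2⟩
        obtain ⟨l, hlS, hlne, hm1, hm2⟩ := (hmemF p).1 hp
        obtain ⟨b, t, rfl⟩ : ∃ b t, l = b :: t := by
          cases l with
          | nil => exact absurd rfl hlne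
          | cons b t => exact ⟨b, t, rfl⟩
        have hbX : b ∈ X := hX b t hlS (fun m hm => hp1 ((hm1 m).2 hm))
        exact (Set.eq_empty_iff_forall_notMem.1 hp2 b) ⟨(hm2 b).2 rfl, hbX⟩
      · intro h n t hnt hT
        have hp : (t.toFinset, ({n} : Finset ℕ)) ∈ {p : Finset ℕ × Finset ℕ | ∃ c, hornB gS p c = true} :=
          (hmemF _).2 ⟨n :: t, hnt, List.cons_ne_nil n t,
            fun m => by simp, fun m => by simp⟩
        have hcl := h _ hp
        by_contra hnX
        apply hcl
        constructor
        · intro x hx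
          simp only [Finset.coe_sort_coe] at hx
          have : x ∈ t := by simpa using hx
          exact hT x this
        · rw [Set.eq_empty_iff_forall_notMem]
          rintro x ⟨hx1, hx2⟩
          have : x = n := by simpa using hx1
          exact hnX (this ▸ hx2)
    · intro n t _ _
      trivial
    · intro X hX Z hZ n t hnt hT
      exact ⟨hX n t hnt (fun m hm => (hT m hm).1), hZ n t hnt (fun m hm => (hT m hm).2)⟩

end QVAuxSection
end

section
/- For every recursively enumerable set S of nonempty lists of natural numbers there exists a computable function f : ℕ × ℕ → Option (Finset ℕ) such that for every Y ⊆ ℕ, the closure C(Y) (the smallest element of V(S) containing Y) equals { x : ℕ | ∃ n : ℕ, ∃ F : Finset ℕ, f (x, n) = some F ∧ ↑F ⊆ Y }; in particular, for all X and Y, Y is a presentation of X in V(S) if and only if X ≤ₑ^f Y. -/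
open Denumerable Encodable
open Nat.Partrec (Code)
open Nat.Partrec.Code

namespace QVAux

/-- One derivation step: `a` is in `prev`, or some rule `a :: t` (with number `< k`,
accepted by `evaln k c`) has all premises in `prev`. -/
def ruleB (c : Code) (k : ℕ) (prev : List ℕ) (a : ℕ) : Bool :=
  decide (a ∈ prev) ||
    (List.range k).foldr
      (fun e b =>
        ((Nat.Partrec.Code.evaln k c e).isSome &&
            (decide ((ofNat (List ℕ) e).head? = some a) &&
              (ofNat (List ℕ) e).tail.foldr (fun m b' => decide (m ∈ prev) && b') true)) || b)
      false

/-- `d` is a valid derivation sequence over hypotheses `L`. -/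
def derivB (c : Code) (k : ℕ) (L d : List ℕ) : Bool :=
  (List.range d.length).foldr
    (fun i b => ruleB c k (L ++ d.take i) (d.getD i 0) && b) true

/-- The list of elements of `ofNat (Finset ℕ) j`. -/
def fList (j : ℕ) : List ℕ := Denumerable.raise' (ofNat (List ℕ) j) 0

/-- The enumeration operator. -/
def opF (c : Code) (p : ℕ × ℕ) : Option (Finset ℕ) :=
  bif derivB c p.2.unpair.1 (fList p.2.unpair.2.unpair.1)
        (ofNat (List ℕ) p.2.unpair.2.unpair.2) &&
      ruleB c p.2.unpair.1
        (fList p.2.unpair.2.unpair.1 ++ ofNat (List ℕ) p.2.unpair.2.unpair.2) p.1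
  then some (ofNat (Finset ℕ) p.2.unpair.2.unpair.1) else none

/- ### Basic boolean lemmas -/

lemma foldr_or {α} (p : α → Bool) (l : List α) :
    l.foldr (fun a b => p a || b) false = l.any p := by
  induction l with
  | nil => rfl
  | cons a l ih => simp [List.foldr, ih]

lemma foldr_and {α} (p : α → Bool) (l : List α) :
    l.foldr (fun a b => p a && b) true = l.all p := by
  induction l with
  | nil => rfl
  | cons a l ih => simp [List.foldr, ih]

/- ### Semantics of `ruleB` -/

lemma ruleB_iff {c : Code} {k : ℕ} {prev : List ℕ} {a : ℕ} :
    ruleB c k prev a = true ↔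
      a ∈ prev ∨ ∃ t : List ℕ, encode (a :: t) < k ∧
        (Nat.Partrec.Code.evaln k c (encode (a :: t))).isSome = true ∧
        ∀ m ∈ t, m ∈ prev := by
  unfold ruleB
  rw [foldr_or]
  simp only [Bool.or_eq_true, decide_eq_true_eq, List.any_eq_true, List.mem_range,
    Bool.and_eq_true]
  constructor
  · rintro (h | ⟨e, he, h1, h2, h3⟩)
    · exact Or.inl h
    · refine Or.inr ⟨(ofNat (List ℕ) e).tail, ?_⟩
      have hcons : (ofNat (List ℕ) e) = a :: (ofNat (List ℕ) e).tail := by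
        cases hl : (ofNat (List ℕ) e) with
        | nil => rw [hl] at h2; simp at h2
        | cons b l => rw [hl] at h2; simp at h2; simp [h2]
      rw [← hcons, Denumerable.encode_ofNat]
      rw [foldr_and, List.all_eq_true] at h3
      exact ⟨he, h1, by simpa using h3⟩
  · rintro (h | ⟨t, h1, h2, h3⟩)
    · exact Or.inl h
    · refine Or.inr ⟨encode (a :: t), h1, ?_, ?_, ?_⟩
      · exact h2
      · simp [Denumerable.ofNat_encode]
      · rw [foldr_and, List.all_eq_true]
        simp [Denumerable.ofNat_encode]
        exact h3

lemma evaln_isSome_mono {c : Code} {k k' e : ℕ} (h : k ≤ k')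
    (hs : (Nat.Partrec.Code.evaln k c e).isSome = true) :
    (Nat.Partrec.Code.evaln k' c e).isSome = true := by
  obtain ⟨y, hy⟩ := Option.isSome_iff_exists.1 hs
  exact Option.isSome_iff_exists.2 ⟨y, Nat.Partrec.Code.evaln_mono h hy⟩

lemma ruleB_mono {c : Code} {k k' : ℕ} {prev prev' : List ℕ} {a : ℕ}
    (hk : k ≤ k') (hp : ∀ m ∈ prev, m ∈ prev') (h : ruleB c k prev a = true) :
    ruleB c k' prev' a = true := by
  rw [ruleB_iff] at h ⊢
  rcases h with h | ⟨t, h1, h2, h3⟩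
  · exact Or.inl (hp _ h)
  · exact Or.inr ⟨t, lt_of_lt_of_le h1 hk, evaln_isSome_mono hk h2,
      fun m hm => hp _ (h3 m hm)⟩

/- ### Semantics of `derivB` -/

lemma derivB_iff {c : Code} {k : ℕ} {L d : List ℕ} :
    derivB c k L d = true ↔
      ∀ i < d.length, ruleB c k (L ++ d.take i) (d.getD i 0) = true := by
  unfold derivB
  rw [foldr_and, List.all_eq_true]
  simp

lemma derivB_mono {c : Code} {k k' : ℕ} {L L' d : List ℕ}
    (hk : k ≤ k') (hL : ∀ m ∈ L, m ∈ L') (h : derivB c k L d = true) :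
    derivB c k' L' d = true := by
  rw [derivB_iff] at h ⊢
  intro i hi
  refine ruleB_mono hk ?_ (h i hi)
  intro m hm
  rcases List.mem_append.1 hm with h' | h'
  · exact List.mem_append.2 (Or.inl (hL _ h'))
  · exact List.mem_append.2 (Or.inr h')

lemma derivB_append {c : Code} {k : ℕ} {L d₁ d₂ : List ℕ}
    (h1 : derivB c k L d₁ = true) (h2 : derivB c k (L ++ d₁) d₂ = true) :
    derivB c k L (d₁ ++ d₂) = true := by
  rw [derivB_iff] at h1 h2 ⊢
  intro i hi
  rcases lt_or_ge i d₁.length with h | h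
  · have ht : (d₁ ++ d₂).take i = d₁.take i := List.take_append_of_le_length (le_of_lt h)
    have hg : (d₁ ++ d₂).getD i 0 = d₁.getD i 0 := List.getD_append _ _ _ _ h
    rw [ht, hg]
    exact h1 i h
  · obtain ⟨i', rfl⟩ := Nat.exists_eq_add_of_le h
    have ht : (d₁ ++ d₂).take (d₁.length + i') = d₁ ++ d₂.take i' := by
      rw [List.take_append, List.take_of_length_le (by omega), Nat.add_sub_cancel_left]
    have hg : (d₁ ++ d₂).getD (d₁.length + i') 0 = d₂.getD i' 0 := by
      rw [List.getD_append_right _ _ _ _ (Nat.le_add_right _ _), Nat.add_sub_cancel_left]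
    rw [ht, hg, ← List.append_assoc]
    have hi' : i' < d₂.length := by
      have := hi; rw [List.length_append] at this; omega
    exact h2 i' hi'

lemma derivB_singleton {c : Code} {k : ℕ} {L : List ℕ} {x : ℕ}
    (h : ruleB c k L x = true) : derivB c k L [x] = true := by
  rw [derivB_iff]
  intro i hi
  obtain rfl : i = 0 := Nat.lt_one_iff.1 (by simpa using hi)
  simpa using h

lemma derivB_nil {c : Code} {k : ℕ} {L : List ℕ} : derivB c k L [] = true := by
  rw [derivB_iff]; intro i hi; simp at hi


/- ### Soundness with respect to `S` -/

section Sem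

variable {S : Set (List ℕ)} {c : Code}

lemma ruleB_sound (hc : ∀ l : List ℕ, l ∈ S ↔ ∃ k, (Nat.Partrec.Code.evaln k c (encode l)).isSome = true)
    {X : Set ℕ} (hX : SatisfiesHorn S X) {k : ℕ} {prev : List ℕ} {a : ℕ}
    (hprev : ∀ m ∈ prev, m ∈ X) (h : ruleB c k prev a = true) : a ∈ X := by
  rw [ruleB_iff] at h
  rcases h with h | ⟨t, _, h2, h3⟩
  · exact hprev _ h
  · exact hX a t ((hc _).2 ⟨k, h2⟩) fun m hm => hprev _ (h3 m hm)

lemma derivB_sound (hc : ∀ l : List ℕ, l ∈ S ↔ ∃ k, (Nat.Partrec.Code.evaln k c (encode l)).isSome = true)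
    {X : Set ℕ} (hX : SatisfiesHorn S X) {k : ℕ} {L d : List ℕ}
    (hL : ∀ m ∈ L, m ∈ X) (h : derivB c k L d = true) : ∀ m ∈ d, m ∈ X := by
  have key : ∀ i, ∀ m ∈ d.take i, m ∈ X := by
    intro i
    induction i with
    | zero => simp
    | succ i ih =>
      intro m hm
      rw [List.take_succ] at hm
      rcases List.mem_append.1 hm with h' | h'
      · exact ih m h'
      · rcases Nat.lt_or_ge i d.length with hi | hi
      
        · have hm' : m = d.getD i 0 := by
            rw [List.getD_eq_getElem _ _ hi]
            have : d[i]? = some d[i] := List.getElem?_eq_getElem hi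
            rw [this] at h'
            simpa using h'
          subst hm'
          refine ruleB_sound hc hX ?_ (derivB_iff.1 h i hi)
          intro m' hm'
          rcases List.mem_append.1 hm' with h'' | h''
          · exact hL _ h''
          · exact ih _ h''
        · rw [List.getElem?_eq_none hi] at h'
          simp at h'
  intro m hm
  have := key d.length
  rw [List.take_length] at this
  exact this m hm

/-- The set of elements derivable from `Y`. -/
def EE (c : Code) (Y : Set ℕ) : Set ℕ :=
  {x | ∃ k : ℕ, ∃ L d : List ℕ,
    (∀ m ∈ L, m ∈ Y) ∧ derivB c k L d = true ∧ ruleB c k (L ++ d) x = true}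

lemma subset_EE (Y : Set ℕ) : Y ⊆ EE c Y := fun y hy =>
  ⟨0, [y], [], by simpa using hy, derivB_nil, by rw [ruleB_iff]; exact Or.inl (by simp)⟩

lemma EE_subset (hc : ∀ l : List ℕ, l ∈ S ↔ ∃ k, (Nat.Partrec.Code.evaln k c (encode l)).isSome = true)
    {X Y : Set ℕ} (hX : X ∈ QV S) (hYX : Y ⊆ X) : EE c Y ⊆ X := by
  rintro x ⟨k, L, d, hL, hder, hrule⟩
  have hLX : ∀ m ∈ L, m ∈ X := fun m hm => hYX (hL m hm)
  have hdX := derivB_sound hc hX hLX hder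
  exact ruleB_sound hc hX
    (fun m hm => (List.mem_append.1 hm).elim (hLX m) (hdX m)) hrule

lemma EE_elem {Y : Set ℕ} {x : ℕ} (h : x ∈ EE c Y) :
    ∃ k : ℕ, ∃ L d : List ℕ, (∀ m ∈ L, m ∈ Y) ∧ derivB c k L d = true ∧ x ∈ d := by
  obtain ⟨k, L, d, hL, hder, hrule⟩ := h
  exact ⟨k, L, d ++ [x], hL,
    derivB_append hder (derivB_singleton hrule), by simp⟩

lemma EE_combine {Y : Set ℕ} : ∀ t : List ℕ, (∀ m ∈ t, m ∈ EE c Y) →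
    ∃ k : ℕ, ∃ L d : List ℕ,
      (∀ m ∈ L, m ∈ Y) ∧ derivB c k L d = true ∧ ∀ m ∈ t, m ∈ L ++ d := by
  intro t
  induction t with
  | nil => exact fun _ => ⟨0, [], [], by simp, derivB_nil, by simp⟩
  | cons a t ih =>
    intro h
    obtain ⟨k₁, L₁, d₁, hL₁, hder₁, ha⟩ := EE_elem (h a (by simp))
    obtain ⟨k₂, L₂, d₂, hL₂, hder₂, ht⟩ := ih fun m hm => h m (by simp [hm])
    refine ⟨max k₁ k₂, L₁ ++ L₂, d₁ ++ d₂, ?_, ?_, ?_⟩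
    · intro m hm; rcases List.mem_append.1 hm with h' | h'
      exacts [hL₁ m h', hL₂ m h']
    · apply derivB_append
      · exact derivB_mono (le_max_left _ _) (fun m hm => by simp [hm]) hder₁
      · refine derivB_mono (le_max_right _ _) (fun m hm => ?_) hder₂
        simp at hm ⊢; tauto
    · intro m hm
      rcases List.mem_cons.1 hm with rfl | h'
      · simp only [List.mem_append]; tauto
      · have := ht m h'; simp only [List.mem_append] at this ⊢; tauto

lemma EE_in_QV (hc : ∀ l : List ℕ, l ∈ S ↔ ∃ k, (Nat.Partrec.Code.evaln k c (encode l)).isSome = true)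
    {Y : Set ℕ} : EE c Y ∈ QV S := by
  intro n₀ t hS' hprem
  obtain ⟨k, L, d, hL, hder, ht⟩ := EE_combine t hprem
  obtain ⟨k₀, hk₀⟩ := (hc _).1 hS'
  refine ⟨max k k₀, L, d, hL,
    derivB_mono (le_max_left _ _) (fun _ h => h) hder, ?_⟩
  rw [ruleB_iff]
  right
  refine ⟨t, ?_, evaln_isSome_mono (le_max_right _ _) hk₀, ht⟩
  obtain ⟨y, hy⟩ := Option.isSome_iff_exists.1 hk₀
  exact lt_of_lt_of_le (Nat.Partrec.Code.evaln_bound hy) (le_max_right _ _)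

/- ### `fList` and `opF` -/

lemma mem_ofNat_finset (j m : ℕ) : m ∈ ofNat (Finset ℕ) j ↔ m ∈ fList j := by
  rw [show Denumerable.ofNat (Finset ℕ) j = Finset.map (Denumerable.eqv ℕ).symm.toEmbedding
    (Denumerable.raise'Finset (ofNat (List ℕ) j) 0) from rfl]
  simp [Denumerable.raise'Finset, Finset.mem_map, Denumerable.eqv, Finset.mem_def, fList]

lemma coe_ofNat_subset (j : ℕ) (Y : Set ℕ) :
    ↑(ofNat (Finset ℕ) j) ⊆ Y ↔ ∀ m ∈ fList j, m ∈ Y := by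
  constructor
  · intro h m hm
    exact h (by simpa [Finset.mem_coe, mem_ofNat_finset] using hm)
  · intro h m hm
    exact h m ((mem_ofNat_finset j m).1 (by simpa [Finset.mem_coe] using hm))

lemma opF_eq (c : Code) (Y : Set ℕ) :
    {x : ℕ | ∃ n : ℕ, ∃ F : Finset ℕ, opF c (x, n) = some F ∧ ↑F ⊆ Y} = EE c Y := by
  ext x
  simp only [Set.mem_setOf_eq]
  constructor
  · rintro ⟨n, F, hF, hFY⟩
    unfold opF at hF
    rcases hb : (derivB c n.unpair.1 (fList n.unpair.2.unpair.1)
          (ofNat (List ℕ) n.unpair.2.unpair.2) &&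
        ruleB c n.unpair.1
          (fList n.unpair.2.unpair.1 ++ ofNat (List ℕ) n.unpair.2.unpair.2) x) with _ | _
    · rw [hb] at hF; simp at hF
    · rw [hb] at hF
      simp only [cond_true, Option.some.injEq] at hF
      rw [Bool.and_eq_true] at hb
      obtain ⟨h1, h2⟩ := hb
      refine ⟨n.unpair.1, fList n.unpair.2.unpair.1, ofNat (List ℕ) n.unpair.2.unpair.2,
        ?_, h1, h2⟩
      rw [← hF] at hFY
      exact (coe_ofNat_subset _ _).1 hFY
  · rintro ⟨k, L, d, hL, hder, hrule⟩
    obtain ⟨j, hj⟩ : ∃ j, ofNat (Finset ℕ) j = L.toFinset := ⟨_, Denumerable.ofNat_encode _⟩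
    have hmem : ∀ m, m ∈ fList j ↔ m ∈ L := by
      intro m
      rw [← mem_ofNat_finset, hj, List.mem_toFinset]
    refine ⟨Nat.pair k (Nat.pair j (encode d)), ofNat (Finset ℕ) j, ?_, ?_⟩
    · unfold opF
      have e1 : (Nat.pair k (Nat.pair j (encode d))).unpair.1 = k := by simp
      have e2 : (Nat.pair k (Nat.pair j (encode d))).unpair.2.unpair.1 = j := by simp
      have e3 : ofNat (List ℕ) (Nat.pair k (Nat.pair j (encode d))).unpair.2.unpair.2 = d := by
        simp [Denumerable.ofNat_encode]
      simp only [e1, e2, e3]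
      have hb1 : derivB c k (fList j) d = true :=
        derivB_mono le_rfl (fun m hm => (hmem m).2 hm) hder
      have hb2 : ruleB c k (fList j ++ d) x = true := by
        refine ruleB_mono le_rfl ?_ hrule
        intro m hm
        rcases List.mem_append.1 hm with h' | h'
        · exact List.mem_append.2 (Or.inl ((hmem m).2 h'))
        · exact List.mem_append.2 (Or.inr h')
      rw [hb1, hb2]
      rfl
    · rw [coe_ofNat_subset]
      intro m hm
      exact hL m ((hmem m).1 hm)

end Sem



/- ### Computability -/

section Comp

lemma take_eq (l : List ℕ) (i : ℕ) :
    l.take i = (List.range (min i l.length)).map fun idx => l.getD idx 0 := by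
  apply List.ext_getElem
  · simp
  · intro n h1 h2
    simp only [List.length_take] at h1
    have hn : n < l.length := lt_of_lt_of_le h1 (min_le_right _ _)
    simp [List.getElem_take, List.getD_eq_getElem _ _ hn, List.getElem?_eq_getElem hn]

lemma htake : Primrec₂ fun (l : List ℕ) (i : ℕ) => l.take i := by
  have h : Primrec fun p : List ℕ × ℕ =>
      (List.range (min p.2 p.1.length)).map fun idx => p.1.getD idx 0 :=
    Primrec.list_map
      (Primrec.list_range.comp (Primrec.nat_min.comp Primrec.snd
        (Primrec.list_length.comp Primrec.fst)))
      ((Primrec.list_getD 0).comp₂ ((Primrec.fst.comp Primrec.fst).to₂) Primrec₂.right)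
  exact Primrec.to₂ (h.of_eq fun p => (take_eq p.1 p.2).symm)

lemma hsum : Primrec fun l : List ℕ => l.foldr (· + ·) 0 :=
  Primrec.list_foldr Primrec.id (Primrec.const 0)
    (Primrec.nat_add.comp₂ ((Primrec.fst.comp Primrec.snd).to₂)
      ((Primrec.snd.comp Primrec.snd).to₂))

lemma raise'_eq : ∀ (l : List ℕ) (n : ℕ),
    Denumerable.raise' l n =
      (List.range l.length).map fun i => (l.take (i + 1)).foldr (· + ·) 0 + i + n
  | [], _ => rfl
  | m :: l, n => by
    rw [Denumerable.raise', raise'_eq l (m + n + 1)]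
    rw [List.length_cons, List.range_succ_eq_map, List.map_cons, List.map_map]
    refine List.cons_eq_cons.2 ⟨by simp, ?_⟩
    apply List.map_congr_left
    intro i _
    simp only [Function.comp_apply, Nat.succ_eq_add_one, List.take_succ_cons, List.foldr_cons]
    omega

lemma hfList : Primrec fList := by
  have h : Primrec fun j : ℕ =>
      (List.range (ofNat (List ℕ) j).length).map
        fun i => ((ofNat (List ℕ) j).take (i + 1)).foldr (· + ·) 0 + i :=
    Primrec.list_map
      (Primrec.list_range.comp (Primrec.list_length.comp (Primrec.ofNat (List ℕ))))
      ((Primrec.nat_add.comp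
        (hsum.comp (htake.comp ((Primrec.ofNat (List ℕ)).comp Primrec.fst)
          (Primrec.succ.comp Primrec.snd)))
        Primrec.snd).to₂)
  refine h.of_eq fun j => ?_
  rw [fList, raise'_eq]
  simp

lemma hmemP : Primrec₂ fun (a : ℕ) (l : List ℕ) => decide (a ∈ l) := by
  have h : Primrec fun p : ℕ × List ℕ => decide (p.2.idxOf p.1 < p.2.length) :=
    (Primrec.nat_lt.comp (Primrec.list_idxOf.comp Primrec.fst Primrec.snd)
      (Primrec.list_length.comp Primrec.snd)).decide
  exact Primrec.to₂ (h.of_eq fun p => decide_eq_decide.2 List.idxOf_lt_length_iff)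

variable (c : Code)

lemma hinner : Primrec fun r : ((ℕ × List ℕ) × ℕ) × ℕ =>
    ((Nat.Partrec.Code.evaln r.1.1.1 c r.2).isSome &&
      (decide ((ofNat (List ℕ) r.2).head? = some r.1.2) &&
        (ofNat (List ℕ) r.2).tail.foldr (fun m b' => decide (m ∈ r.1.1.2) && b') true)) := by
  have i1 : Primrec fun r : ((ℕ × List ℕ) × ℕ) × ℕ =>
      (Nat.Partrec.Code.evaln r.1.1.1 c r.2).isSome :=
    Primrec.option_isSome.comp (Nat.Partrec.Code.primrec_evaln.comp
      (((Primrec.fst.comp (Primrec.fst.comp Primrec.fst)).pair (Primrec.const c)).pair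
        Primrec.snd))
  have i2 : Primrec fun r : ((ℕ × List ℕ) × ℕ) × ℕ =>
      decide ((ofNat (List ℕ) r.2).head? = some r.1.2) :=
    (Primrec.eq.comp (Primrec.list_head?.comp ((Primrec.ofNat (List ℕ)).comp Primrec.snd))
      (Primrec.option_some.comp (Primrec.snd.comp Primrec.fst))).decide
  have i3 : Primrec fun r : ((ℕ × List ℕ) × ℕ) × ℕ =>
      (ofNat (List ℕ) r.2).tail.foldr (fun m b' => decide (m ∈ r.1.1.2) && b') true :=
    Primrec.list_foldr (Primrec.list_tail.comp ((Primrec.ofNat (List ℕ)).comp Primrec.snd))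
      (Primrec.const true)
      (((Primrec.dom_bool₂ (· && ·)).comp
          (hmemP.comp (Primrec.fst.comp Primrec.snd)
            ((Primrec.snd.comp (Primrec.fst.comp Primrec.fst)).comp Primrec.fst))
          (Primrec.snd.comp Primrec.snd)).to₂)
  exact (Primrec.dom_bool₂ (· && ·)).comp i1
    ((Primrec.dom_bool₂ (· && ·)).comp i2 i3)

lemma hrule : Primrec fun q : (ℕ × List ℕ) × ℕ => ruleB c q.1.1 q.1.2 q.2 := by
  have hA : Primrec fun q : (ℕ × List ℕ) × ℕ => decide (q.2 ∈ q.1.2) :=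
    hmemP.comp Primrec.snd (Primrec.snd.comp Primrec.fst)
  have hB : Primrec fun q : (ℕ × List ℕ) × ℕ =>
      (List.range q.1.1).foldr
        (fun e b =>
          ((Nat.Partrec.Code.evaln q.1.1 c e).isSome &&
              (decide ((ofNat (List ℕ) e).head? = some q.2) &&
                (ofNat (List ℕ) e).tail.foldr
                  (fun m b' => decide (m ∈ q.1.2) && b') true)) || b)
        false :=
    Primrec.list_foldr (Primrec.list_range.comp (Primrec.fst.comp Primrec.fst))
      (Primrec.const false)
      (((Primrec.dom_bool₂ (· || ·)).comp
          ((hinner c).comp (Primrec.fst.pair (Primrec.fst.comp Primrec.snd)))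
          (Primrec.snd.comp Primrec.snd)).to₂)
  exact ((Primrec.dom_bool₂ (· || ·)).comp hA hB).of_eq fun q => rfl

lemma hderiv : Primrec fun q : ℕ × List ℕ × List ℕ => derivB c q.1 q.2.1 q.2.2 := by
  have h : Primrec fun q : ℕ × List ℕ × List ℕ =>
      (List.range q.2.2.length).foldr
        (fun i b => ruleB c q.1 (q.2.1 ++ q.2.2.take i) (q.2.2.getD i 0) && b) true :=
    Primrec.list_foldr
      (Primrec.list_range.comp (Primrec.list_length.comp (Primrec.snd.comp Primrec.snd)))
      (Primrec.const true)
      (((Primrec.dom_bool₂ (· && ·)).comp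
          ((hrule c).comp
            (((Primrec.fst.comp Primrec.fst).pair
              (Primrec.list_append.comp ((Primrec.fst.comp Primrec.snd).comp Primrec.fst)
                (htake.comp ((Primrec.snd.comp Primrec.snd).comp Primrec.fst)
                  (Primrec.fst.comp Primrec.snd)))).pair
              ((Primrec.list_getD 0).comp ((Primrec.snd.comp Primrec.snd).comp Primrec.fst)
                (Primrec.fst.comp Primrec.snd))))
          (Primrec.snd.comp Primrec.snd)).to₂)
  exact h.of_eq fun q => rfl

lemma hopF : Computable (opF c) := by
  have kpart : Primrec fun p : ℕ × ℕ => p.2.unpair.1 :=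
    Primrec.fst.comp (Primrec.unpair.comp Primrec.snd)
  have jpart : Primrec fun p : ℕ × ℕ => p.2.unpair.2.unpair.1 :=
    Primrec.fst.comp (Primrec.unpair.comp (Primrec.snd.comp (Primrec.unpair.comp Primrec.snd)))
  have ddpart : Primrec fun p : ℕ × ℕ => ofNat (List ℕ) p.2.unpair.2.unpair.2 :=
    (Primrec.ofNat (List ℕ)).comp
      (Primrec.snd.comp (Primrec.unpair.comp (Primrec.snd.comp (Primrec.unpair.comp Primrec.snd))))
  have hbool : Primrec fun p : ℕ × ℕ =>
      (derivB c p.2.unpair.1 (fList p.2.unpair.2.unpair.1)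
          (ofNat (List ℕ) p.2.unpair.2.unpair.2) &&
        ruleB c p.2.unpair.1
          (fList p.2.unpair.2.unpair.1 ++ ofNat (List ℕ) p.2.unpair.2.unpair.2) p.1) :=
    (Primrec.dom_bool₂ (· && ·)).comp
      ((hderiv c).comp (kpart.pair ((hfList.comp jpart).pair ddpart)))
      ((hrule c).comp ((kpart.pair
        (Primrec.list_append.comp (hfList.comp jpart) ddpart)).pair Primrec.fst))
  have h : Primrec (opF c) :=
    (Primrec.cond hbool
      (Primrec.option_some.comp ((Primrec.ofNat (Finset ℕ)).comp jpart))
      (Primrec.const none)).of_eq fun p => rfl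
  exact h.to_comp

end Comp

end QVAux


open QVAux

/-- For any r.e. quasivariety there is a single computable enumeration operator
`f` computing the closure map; in particular `Y` presents `X` iff `X ≤ₑ^f Y`. -/
theorem closure_is_enumeration_operator (S : Set (List ℕ))
    (hne : ∀ l ∈ S, l ≠ []) (hS : REPred (· ∈ S)) :
    ∃ f : ℕ × ℕ → Option (Finset ℕ), Computable f ∧
      (∀ Y : Set ℕ, QVclosure S Y =
        {x : ℕ | ∃ n : ℕ, ∃ F : Finset ℕ, f (x, n) = some F ∧ ↑F ⊆ Y}) ∧
      (∀ X ∈ QV S, ∀ Y : Set ℕ, QVclosure S Y = X ↔ EnumRedVia X Y f) := by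
  obtain ⟨c, hcode⟩ := Nat.Partrec.Code.exists_code.1 hS
  have hc : ∀ l : List ℕ, l ∈ S ↔ ∃ k, (Nat.Partrec.Code.evaln k c (encode l)).isSome = true := by
    intro l
    have h1 : (eval c (encode l)).Dom ↔ l ∈ S := by
      rw [hcode]
      simp [Encodable.encodek, Part.assert]
    rw [← h1]
    constructor
    · intro h
      obtain ⟨y, hy⟩ := Part.dom_iff_mem.1 h
      obtain ⟨k, hk⟩ := evaln_complete.1 hy
      exact ⟨k, Option.isSome_iff_exists.2 ⟨y, hk⟩⟩
    · rintro ⟨k, hk⟩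
      obtain ⟨y, hy⟩ := Option.isSome_iff_exists.1 hk
      exact Part.dom_iff_mem.2 ⟨y, evaln_sound hy⟩
  have hcomp : Computable (opF c) := hopF c
  have hmain : ∀ Y : Set ℕ, QVclosure S Y =
      {x : ℕ | ∃ n : ℕ, ∃ F : Finset ℕ, opF c (x, n) = some F ∧ ↑F ⊆ Y} := by
    intro Y
    rw [opF_eq c Y]
    apply Set.Subset.antisymm
    · exact Set.sInter_subset_of_mem ⟨EE_in_QV hc, subset_EE Y⟩
    · intro x hx
      simp only [QVclosure, Set.mem_sInter]
      rintro X ⟨hX, hYX⟩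
      exact EE_subset hc hX hYX hx
  refine ⟨opF c, hcomp, hmain, ?_⟩
  intro X hX Y
  constructor
  · rintro rfl
    exact ⟨hcomp, fun x => Set.ext_iff.1 (hmain Y) x⟩
  · rintro ⟨-, hiff⟩
    ext x
    rw [Set.ext_iff.1 (hmain Y) x]
    exact (hiff x).symm
end

section
/- Let S be a recursively enumerable set of nonempty lists of natural numbers. If Y ⊆ ℕ is recursively enumerable (REPred (· ∈ Y)) and X = C(Y) is the closure of Y in V(S), then X is recursively enumerable (REPred (· ∈ X)). In particular every finitely presented or recursively presented element of V(S) is a recursively enumerable subset of ℕ. -/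
namespace QVAux

open Encodable

/-! ### Semidecidability witnesses -/

/-- From an r.e. predicate, extract a primitive recursive "stage" verifier. -/
theorem exists_primrec_witness {α} [Primcodable α] {p : α → Prop} (hp : REPred p) :
    ∃ f : α → ℕ → Bool, Primrec₂ f ∧ ∀ a, p a ↔ ∃ k, f a k = true := by
  unfold REPred Partrec at hp
  obtain ⟨c, hc⟩ := Nat.Partrec.Code.exists_code.1 hp
  refine ⟨fun a k => (Nat.Partrec.Code.evaln k c (Encodable.encode a)).isSome, ?_, ?_⟩
  · exact Primrec.option_isSome.comp
      (Nat.Partrec.Code.primrec_evaln.comp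
        ((Primrec.snd.pair (Primrec.const c)).pair (Primrec.encode.comp Primrec.fst)))
  · intro a
    have h1 : p a ↔ (Nat.Partrec.Code.eval c (Encodable.encode a)).Dom := by
      rw [hc]
      simp [Part.assert, Encodable.encodek]
    rw [h1, Part.dom_iff_mem]
    constructor
    · rintro ⟨x, hx⟩
      obtain ⟨k, hk⟩ := Nat.Partrec.Code.evaln_complete.1 hx
      exact ⟨k, Option.isSome_iff_exists.2 ⟨x, hk⟩⟩
    · rintro ⟨k, hk⟩
      obtain ⟨x, hx⟩ := Option.isSome_iff_exists.1 hk
      exact ⟨x, Nat.Partrec.Code.evaln_sound hx⟩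

/-- A predicate of the form `∃ b, f a b = true` with computable `f` is r.e. -/
theorem rePred_exists {α β} [Primcodable α] [Primcodable β] {f : α → β → Bool}
    (hf : Computable₂ f) : REPred fun a => ∃ b, f a b = true := by
  have hc : Computable fun p : (α × ℕ) × β =>
      (bif f p.1.1 p.2 then some () else none : Option Unit) :=
    Computable.cond (hf.comp (Computable.fst.comp Computable.fst) Computable.snd)
      (Computable.const (some ())) (Computable.const none)
  have hg : Computable₂ fun (a : α) (n : ℕ) =>
      (Encodable.decode (α := β) n).bind fun b => (bif f a b then some () else none) :=
    Computable.option_bind (Computable.decode.comp Computable.snd) hc.to₂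
  have hpart := Partrec.rfindOpt hg
  have hdom := hpart.dom_re
  apply hdom.of_eq
  intro a
  rw [Nat.rfindOpt_dom]
  constructor
  · rintro ⟨n, u, hu⟩
    simp only [Option.mem_def, Option.bind_eq_some_iff] at hu
    obtain ⟨b, hb, hfb⟩ := hu
    refine ⟨b, ?_⟩
    cases hfab : f a b
    · rw [hfab] at hfb; simp at hfb
    · rfl
  · rintro ⟨b, hb⟩
    exact ⟨Encodable.encode b, (), by simp [Encodable.encodek, hb]⟩

/-! ### Derivations -/

/-- An entry of a derivation: a derived element together with a certificate,
either a `Y`-stage or a Horn rule tail with an `S`-stage. -/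
abbrev Ent : Type := ℕ × (ℕ ⊕ (List ℕ × ℕ))

/-- Boolean list membership via `foldr`. -/
def memB (m : ℕ) (l : List ℕ) : Bool := l.foldr (fun x b => (x == m) || b) false

theorem memB_iff {m : ℕ} {l : List ℕ} : memB m l = true ↔ m ∈ l := by
  induction l with
  | nil => simp [memB]
  | cons x l ih =>
    rw [show memB m (x :: l) = ((x == m) || memB m l) from rfl]
    simp only [Bool.or_eq_true, beq_iff_eq, ih, List.mem_cons]
    constructor
    · rintro (h | h)
      · exact Or.inl h.symm
      · exact Or.inr h
    · rintro (h | h)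
      · exact Or.inl h.symm
      · exact Or.inr h

/-- Boolean sublist test via `foldr`. -/
def subB (t l : List ℕ) : Bool := t.foldr (fun m b => memB m l && b) true

theorem subB_iff {t l : List ℕ} : subB t l = true ↔ ∀ m ∈ t, m ∈ l := by
  induction t with
  | nil => simp [subB]
  | cons x t ih =>
    rw [show subB (x :: t) l = (memB x l && subB t l) from rfl]
    simp [ih, memB_iff]

variable (fY : ℕ → ℕ → Bool) (fS : List ℕ → ℕ → Bool)

/-- Check one derivation entry against the previously derived elements. -/
def checkEnt (prev : List ℕ) : Ent → Bool
  | (a, Sum.inl k) => fY a k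
  | (a, Sum.inr (t, k)) => fS (a :: t) k && subB t prev

/-- Check a derivation, accumulating derived elements in `prev`. -/
def goodAux : List ℕ → List Ent → Bool
  | _, [] => true
  | prev, e :: w => checkEnt fY fS prev e && goodAux (e.1 :: prev) w

theorem checkEnt_mono {prev prev' : List ℕ} (h : ∀ m ∈ prev, m ∈ prev') {e : Ent}
    (he : checkEnt fY fS prev e = true) : checkEnt fY fS prev' e = true := by
  rcases e with ⟨a, k | ⟨t, k⟩⟩
  · exact he
  · simp only [checkEnt, Bool.and_eq_true, subB_iff] at he ⊢
    exact ⟨he.1, fun m hm => h m (he.2 m hm)⟩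

theorem goodAux_mono : ∀ {w : List Ent} {prev prev' : List ℕ},
    (∀ m ∈ prev, m ∈ prev') → goodAux fY fS prev w = true → goodAux fY fS prev' w = true := by
  intro w
  induction w with
  | nil => intro _ _ _ _; rfl
  | cons e w ih =>
    intro prev prev' h hw
    simp only [goodAux, Bool.and_eq_true] at hw ⊢
    refine ⟨checkEnt_mono fY fS h hw.1, ih ?_ hw.2⟩
    intro m hm
    rcases List.mem_cons.1 hm with h' | h'
    · exact List.mem_cons.2 (Or.inl h')
    · exact List.mem_cons.2 (Or.inr (h m h'))

theorem goodAux_append : ∀ {w₁ w₂ : List Ent} {prev : List ℕ},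
    goodAux fY fS prev w₁ = true → goodAux fY fS (w₁.map Prod.fst ++ prev) w₂ = true →
    goodAux fY fS prev (w₁ ++ w₂) = true := by
  intro w₁
  induction w₁ with
  | nil => intro w₂ prev _ h2; simpa using h2
  | cons e w₁ ih =>
    intro w₂ prev h1 h2
    simp only [goodAux, List.cons_append, Bool.and_eq_true] at h1 ⊢
    refine ⟨h1.1, ih h1.2 ?_⟩
    refine goodAux_mono fY fS ?_ h2
    intro m hm
    simp only [List.map_cons, List.cons_append, List.mem_cons, List.mem_append] at hm ⊢
    tauto

/-- The set of elements derivable from scratch. -/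
def Der : Set ℕ := {x | ∃ w : List Ent, goodAux fY fS [] w = true ∧ x ∈ w.map Prod.fst}

theorem der_sound {Y : Set ℕ} {S : Set (List ℕ)} {X : Set ℕ}
    (hX : SatisfiesHorn S X) (hYX : Y ⊆ X)
    (hfY : ∀ a k, fY a k = true → a ∈ Y) (hfS : ∀ l k, fS l k = true → l ∈ S) :
    ∀ (w : List Ent) (prev : List ℕ), (∀ m ∈ prev, m ∈ X) →
      goodAux fY fS prev w = true → ∀ m ∈ w.map Prod.fst, m ∈ X := by
  intro w
  induction w with
  | nil => intro prev _ _ m hm; simp at hm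
  | cons e w ih =>
    intro prev hprev hw m hm
    simp only [goodAux, Bool.and_eq_true] at hw
    have he1 : e.1 ∈ X := by
      rcases e with ⟨a, k | ⟨t, k⟩⟩
      · exact hYX (hfY a k hw.1)
      · simp only [checkEnt, Bool.and_eq_true, subB_iff] at hw
        exact hX a t (hfS _ k hw.1.1) fun m hm => hprev m (hw.1.2 m hm)
    have hprev' : ∀ m ∈ e.1 :: prev, m ∈ X := by
      intro m hm
      rcases List.mem_cons.1 hm with h | h
      · exact h ▸ he1
      · exact hprev m h
    simp only [List.map_cons, List.mem_cons] at hm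
    rcases hm with h | h
    · exact h ▸ he1
    · exact ih (e.1 :: prev) hprev' hw.2 m h

theorem der_combine (t : List ℕ) (ht : ∀ m ∈ t, m ∈ Der fY fS) :
    ∃ w : List Ent, goodAux fY fS [] w = true ∧ ∀ m ∈ t, m ∈ w.map Prod.fst := by
  induction t with
  | nil => exact ⟨[], rfl, by simp⟩
  | cons x t ih =>
    obtain ⟨w₁, hw₁, hx⟩ := ht x List.mem_cons_self
    obtain ⟨w₂, hw₂, hts⟩ := ih fun m hm => ht m (List.mem_cons.2 (Or.inr hm))
    refine ⟨w₁ ++ w₂, ?_, ?_⟩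
    · exact goodAux_append fY fS hw₁
        (goodAux_mono fY fS (fun m hm => by simp at hm) hw₂)
    · intro m hm
      simp only [List.map_append, List.mem_append]
      rcases List.mem_cons.1 hm with h | h
      · exact Or.inl (h ▸ hx)
      · exact Or.inr (hts m h)

theorem der_horn {S : Set (List ℕ)} (hfS : ∀ l ∈ S, ∃ k, fS l k = true) :
    SatisfiesHorn S (Der fY fS) := by
  intro n₀ t hmem hall
  obtain ⟨w, hw, hts⟩ := der_combine fY fS t hall
  obtain ⟨k, hk⟩ := hfS _ hmem
  refine ⟨w ++ [(n₀, Sum.inr (t, k))], ?_, by simp⟩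
  apply goodAux_append fY fS hw
  simp only [goodAux, checkEnt, Bool.and_eq_true, subB_iff]
  refine ⟨⟨hk, fun m hm => ?_⟩, by trivial⟩
  simpa using hts m hm

theorem der_base {Y : Set ℕ} (hfY : ∀ a ∈ Y, ∃ k, fY a k = true) : Y ⊆ Der fY fS := by
  intro a ha
  obtain ⟨k, hk⟩ := hfY a ha
  refine ⟨[(a, Sum.inl k)], ?_, by simp⟩
  simp only [goodAux, checkEnt, Bool.and_eq_true]
  exact ⟨hk, by trivial⟩

/-! ### Computability of the derivation checker -/

theorem primrec_or : Primrec₂ (· || · : Bool → Bool → Bool) :=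
  (Primrec.cond Primrec.fst (Primrec.const true) Primrec.snd).of_eq fun p => by
    cases p.1 <;> rfl

theorem primrec_and : Primrec₂ (· && · : Bool → Bool → Bool) :=
  (Primrec.cond Primrec.fst Primrec.snd (Primrec.const false)).of_eq fun p => by
    cases p.1 <;> rfl

theorem memB_pr : Primrec₂ memB :=
  (Primrec.list_foldr Primrec.snd (Primrec.const false)
    ((primrec_or.comp
      (Primrec.beq.comp (Primrec.fst.comp Primrec.snd) (Primrec.fst.comp Primrec.fst))
      (Primrec.snd.comp Primrec.snd)).to₂)).of_eq fun _ => rfl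

theorem subB_pr : Primrec₂ subB :=
  (Primrec.list_foldr Primrec.fst (Primrec.const true)
    ((primrec_and.comp
      (memB_pr.comp (Primrec.fst.comp Primrec.snd) (Primrec.snd.comp Primrec.fst))
      (Primrec.snd.comp Primrec.snd)).to₂)).of_eq fun _ => rfl

theorem checkEnt_pr (hfY : Primrec₂ fY) (hfS : Primrec₂ fS) :
    Primrec₂ (checkEnt fY fS) :=
  (Primrec.sumCasesOn (Primrec.snd.comp Primrec.snd)
      ((hfY.comp (Primrec.fst.comp (Primrec.snd.comp Primrec.fst)) Primrec.snd).to₂)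
      ((primrec_and.comp
        (hfS.comp
          (Primrec.list_cons.comp (Primrec.fst.comp (Primrec.snd.comp Primrec.fst))
            (Primrec.fst.comp Primrec.snd))
          (Primrec.snd.comp Primrec.snd))
        (subB_pr.comp (Primrec.fst.comp Primrec.snd)
          (Primrec.fst.comp Primrec.fst))).to₂)).of_eq fun q => by
    rcases q with ⟨prev, a, k | ⟨t, k⟩⟩ <;> rfl

theorem goodAux_foldl : ∀ (w : List Ent) (prev : List ℕ) (b : Bool),
    (w.foldl (fun s e => (e.1 :: s.1, s.2 && checkEnt fY fS s.1 e)) (prev, b)).2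
      = (b && goodAux fY fS prev w) := by
  intro w
  induction w with
  | nil => intro prev b; simp [goodAux]
  | cons e w ih =>
    intro prev b
    simp only [List.foldl, goodAux]
    rw [ih]
    rw [Bool.and_assoc]

theorem good_pr (hfY : Primrec₂ fY) (hfS : Primrec₂ fS) :
    Primrec fun w : List Ent => goodAux fY fS [] w := by
  have hstep : Primrec fun q : List Ent × ((List ℕ × Bool) × Ent) =>
      (q.2.2.1 :: q.2.1.1, q.2.1.2 && checkEnt fY fS q.2.1.1 q.2.2) :=
    Primrec.pair
      (Primrec.list_cons.comp (Primrec.fst.comp (Primrec.snd.comp Primrec.snd))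
        (Primrec.fst.comp (Primrec.fst.comp Primrec.snd)))
      (primrec_and.comp (Primrec.snd.comp (Primrec.fst.comp Primrec.snd))
        ((checkEnt_pr fY fS hfY hfS).comp (Primrec.fst.comp (Primrec.fst.comp Primrec.snd))
          (Primrec.snd.comp Primrec.snd)))
  have h := Primrec.list_foldl (Primrec.id (α := List Ent))
    (Primrec.const (([] : List ℕ), true)) hstep.to₂
  have h2 := Primrec.snd.comp h
  apply h2.of_eq
  intro w
  show (w.foldl (fun s e => (e.1 :: s.1, s.2 && checkEnt fY fS s.1 e))
      (([] : List ℕ), true)).2 = _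
  rw [goodAux_foldl]
  simp

theorem F_pr (hfY : Primrec₂ fY) (hfS : Primrec₂ fS) :
    Primrec₂ fun (x : ℕ) (w : List Ent) =>
      goodAux fY fS [] w && memB x (w.map Prod.fst) := by
  have hmap : Primrec fun p : ℕ × List Ent => p.2.map Prod.fst :=
    (Primrec.list_map Primrec.snd ((Primrec.fst.comp Primrec.snd).to₂ :
      Primrec₂ fun (_ : ℕ × List Ent) (e : Ent) => e.1)).of_eq fun p => by simp
  exact (primrec_and.comp ((good_pr fY fS hfY hfS).comp Primrec.snd)
    (memB_pr.comp Primrec.fst hmap))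

end QVAux

/-- In an r.e. quasivariety, the closure of an r.e. set is r.e.; in particular
finitely or recursively presented points are recursively enumerable. -/
theorem closure_re_of_re (S : Set (List ℕ))
    (hne : ∀ l ∈ S, l ≠ []) (hS : REPred (· ∈ S))
    (Y : Set ℕ) (hY : REPred (· ∈ Y)) :
    REPred (· ∈ QVclosure S Y) := by
  obtain ⟨fY, hfYpr, hfY⟩ := QVAux.exists_primrec_witness hY
  obtain ⟨fS, hfSpr, hfS⟩ := QVAux.exists_primrec_witness hS
  -- the derivable set coincides with the closure
  have hDQV : QVAux.Der fY fS ∈ QV S :=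
    QVAux.der_horn fY fS fun l hl => (hfS l).1 hl
  have hYD : Y ⊆ QVAux.Der fY fS :=
    QVAux.der_base fY fS fun a ha => (hfY a).1 ha
  have key : QVclosure S Y = QVAux.Der fY fS := by
    apply Set.Subset.antisymm
    · exact Set.sInter_subset_of_mem ⟨hDQV, hYD⟩
    · intro x hx
      intro X hX
      obtain ⟨w, hw, hxw⟩ := hx
      exact QVAux.der_sound fY fS hX.1 hX.2
        (fun a k hk => (hfY a).2 ⟨k, hk⟩) (fun l k hk => (hfS l).2 ⟨k, hk⟩)
        w [] (by simp) hw x hxw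
  have hre : REPred fun x : ℕ =>
      ∃ w : List QVAux.Ent, (QVAux.goodAux fY fS [] w && QVAux.memB x (w.map Prod.fst)) = true :=
    QVAux.rePred_exists (QVAux.F_pr fY fS hfYpr hfSpr).to_comp
  apply hre.of_eq
  intro x
  rw [key]
  constructor
  · rintro ⟨w, hw⟩
    simp only [Bool.and_eq_true, QVAux.memB_iff] at hw
    exact ⟨w, hw.1, hw.2⟩
  · rintro ⟨w, hw, hxw⟩
    exact ⟨w, by simp [hw, QVAux.memB_iff, hxw]⟩
end

section
/- Let S be a recursively enumerable set of nonempty lists of natural numbers. If X is a maximal element of the quasivariety V(S), then the complement Xᶜ = ℕ \ X is enumeration reducible to X: Xᶜ ≤ₑ X. -/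
/-- `X` is a maximal element of the quasivariety `QV S`. -/
def QVMaximal (S : Set (List ℕ)) (X : Set ℕ) : Prop :=
  X ∈ QV S ∧ ∀ Z ∈ QV S, X ⊆ Z → Z = X ∨ Z = Set.univ

namespace QVAux

open Encodable Denumerable
open Nat.Partrec (Code)
open Nat.Partrec.Code

/-! ### Derivations -/

inductive Derives (S : Set (List ℕ)) (Y : Set ℕ) : ℕ → Prop
  | base {n : ℕ} : n ∈ Y → Derives S Y n
  | step {n₀ : ℕ} {t : List ℕ} : (n₀ :: t) ∈ S → (∀ m ∈ t, Derives S Y m) →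
      Derives S Y n₀

theorem Derives.mono {S : Set (List ℕ)} {Y Z : Set ℕ} {n : ℕ}
    (h : Derives S Y n) (hYZ : Y ⊆ Z) : Derives S Z n := by
  induction h with
  | base h => exact .base (hYZ h)
  | step hS _ ih => exact .step hS ih

theorem univ_mem_QV (S : Set (List ℕ)) : Set.univ ∈ QV S := fun _ _ _ _ => trivial

theorem subset_closure (S : Set (List ℕ)) (Y : Set ℕ) : Y ⊆ QVclosure S Y :=
  fun _ hn => Set.mem_sInter.2 fun _ hZ => hZ.2 hn

theorem closure_subset {S : Set (List ℕ)} {Y Z : Set ℕ} (hZ : Z ∈ QV S) (hYZ : Y ⊆ Z) :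
    QVclosure S Y ⊆ Z :=
  Set.sInter_subset_of_mem ⟨hZ, hYZ⟩

theorem closure_mem_QV (S : Set (List ℕ)) (Y : Set ℕ) : QVclosure S Y ∈ QV S := by
  intro n₀ t ht hmem
  refine Set.mem_sInter.2 fun Z hZ => ?_
  exact hZ.1 n₀ t ht fun m hm => Set.mem_sInter.1 (hmem m hm) Z hZ

theorem mem_closure_iff {S : Set (List ℕ)} {Y : Set ℕ} {n : ℕ} :
    n ∈ QVclosure S Y ↔ Derives S Y n := by
  constructor
  · intro h
    exact Set.mem_sInter.1 h {m | Derives S Y m}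
      ⟨fun n₀ t ht hmem => Derives.step ht hmem, fun m hm => Derives.base hm⟩
  · intro h
    induction h with
    | base h => exact subset_closure _ _ h
    | step hS _ ih => exact closure_mem_QV S Y _ _ hS ih

/-! ### The verification algorithm -/

def raiseSet (l : List ℕ) : List ℕ :=
  (l.foldl (fun (p : List ℕ × ℕ) m => ((m + p.2) :: p.1, m + p.2 + 1)) ([], 0)).1

theorem raiseSet_aux (l : List ℕ) (p : List ℕ × ℕ) (a : ℕ) :
    a ∈ (l.foldl (fun (p : List ℕ × ℕ) m => ((m + p.2) :: p.1, m + p.2 + 1)) p).1 ↔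
      a ∈ p.1 ∨ a ∈ Denumerable.raise' l p.2 := by
  induction l generalizing p with
  | nil => simp [Denumerable.raise']
  | cons m l ih =>
    simp only [List.foldl_cons, Denumerable.raise', List.mem_cons]
    rw [ih]
    simp only [List.mem_cons]
    tauto

theorem mem_raiseSet {l : List ℕ} {a : ℕ} :
    a ∈ raiseSet l ↔ a ∈ Denumerable.raise' l 0 := by
  rw [raiseSet, raiseSet_aux]
  simp

theorem mem_ofNat_finset_s5 {a n : ℕ} :
    a ∈ Denumerable.ofNat (Finset ℕ) n ↔
      a ∈ Denumerable.raise' (Denumerable.ofNat (List ℕ) n) 0 := by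
  show a ∈ Finset.map (Denumerable.eqv ℕ).symm.toEmbedding
      (Denumerable.raise'Finset (Denumerable.ofNat (List ℕ) n) 0) ↔ _
  rw [Finset.mem_map_equiv]
  simp [Denumerable.raise'Finset, Denumerable.eqv]
  exact Iff.rfl

theorem mem_raiseSet_ofNat {a n : ℕ} :
    a ∈ raiseSet (Denumerable.ofNat (List ℕ) n) ↔ a ∈ Denumerable.ofNat (Finset ℕ) n := by
  rw [mem_raiseSet, mem_ofNat_finset_s5]

abbrev HEntry : Type := ℕ × List ℕ × ℕ

/-- One step of derivation checking. State: `(derived list, error flag)`.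
An entry `(tag, l, k)` is a leaf assumption `k` when `tag = 0`, and otherwise
the Horn rule `l ∈ S` (with enumeration witness `k`). -/
def hstep (c : Code) (x : ℕ) (LF : List ℕ) (s : List ℕ × ℕ) (e : HEntry) : List ℕ × ℕ :=
  if s.2 = 0 then
    if e.1 = 0 then
      if e.2.2 = x ∨ e.2.2 ∈ LF then (e.2.2 :: s.1, 0) else (s.1, 1)
    else
      if e.2.1 ≠ [] ∧ (∀ m ∈ e.2.1.tail, m ∈ s.1) ∧
          (evaln e.2.2 c (encode e.2.1)).isSome = true then
        (e.2.1.headI :: s.1, 0)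
      else (s.1, 1)
  else s

def hrun (c : Code) (x : ℕ) (LF : List ℕ) (D : List HEntry) (s : List ℕ × ℕ) : List ℕ × ℕ :=
  D.foldl (hstep c x LF) s

def hfun (c : Code) (b : ℕ) (p : ℕ × ℕ) : Option (Finset ℕ) :=
  (Encodable.decode (α := ℕ × List HEntry) p.2).bind fun q =>
    if (hrun c p.1 (raiseSet (Denumerable.ofNat (List ℕ) q.1)) q.2 ([], 0)).2 = 0 ∧
        b ∈ (hrun c p.1 (raiseSet (Denumerable.ofNat (List ℕ) q.1)) q.2 ([], 0)).1 then
      some (Denumerable.ofNat (Finset ℕ) q.1)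
    else none

theorem hstep_err {c : Code} {x : ℕ} {LF : List ℕ} {s : List ℕ × ℕ} {e : HEntry}
    (h : s.2 ≠ 0) : hstep c x LF s e = s := by
  simp only [hstep, if_neg h]

theorem hstep_leaf {c : Code} {x : ℕ} {LF : List ℕ} (der : List ℕ) (l : List ℕ) (m : ℕ) :
    hstep c x LF (der, 0) (0, l, m) = if m = x ∨ m ∈ LF then (m :: der, 0) else (der, 1) := by
  simp only [hstep]
  norm_num

theorem hstep_rule {c : Code} {x : ℕ} {LF : List ℕ} (der : List ℕ) {tag : ℕ} (l : List ℕ)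
    (k : ℕ) (htag : tag ≠ 0) :
    hstep c x LF (der, 0) (tag, l, k) =
      if l ≠ [] ∧ (∀ m ∈ l.tail, m ∈ der) ∧ (evaln k c (encode l)).isSome = true then
        (l.headI :: der, 0)
      else (der, 1) := by
  simp only [hstep, if_pos rfl, if_neg htag]
  rw [if_pos trivial]

theorem hrun_err (c : Code) (x : ℕ) (LF : List ℕ) (D : List HEntry) (s : List ℕ × ℕ)
    (hs : s.2 ≠ 0) : hrun c x LF D s = s := by
  induction D with
  | nil => rfl
  | cons e D ih =>
    show hrun c x LF D (hstep c x LF s e) = s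
    rw [hstep_err hs]; exact ih

/-! ### Soundness -/

theorem hrun_sound {S : Set (List ℕ)} {c : Code} {x : ℕ} {LF : List ℕ}
    (hc : ∀ l : List ℕ, l ∈ S ↔ ∃ k, (evaln k c (encode l)).isSome = true) :
    ∀ (D : List HEntry) (d0 d1 : List ℕ), hrun c x LF D (d0, 0) = (d1, 0) →
      (∀ m ∈ d0, Derives S ({m | m ∈ LF} ∪ {x}) m) →
      ∀ m ∈ d1, Derives S ({m | m ∈ LF} ∪ {x}) m := by
  intro D
  induction D with
  | nil =>
    intro d0 d1 h hd0
    have : d0 = d1 := congrArg Prod.fst h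
    subst this; exact hd0
  | cons e D ih =>
    intro d0 d1 h hd0
    obtain ⟨tag, l, k⟩ := e
    have h' : hrun c x LF D (hstep c x LF (d0, 0) (tag, l, k)) = (d1, 0) := h
    by_cases htag : tag = 0
    · subst htag
      rw [hstep_leaf] at h'
      by_cases hcond : k = x ∨ k ∈ LF
      · rw [if_pos hcond] at h'
        refine ih _ _ h' ?_
        intro m' hm'
        rcases List.mem_cons.1 hm' with rfl | hm'
        · rcases hcond with rfl | hc'
          · exact .base (Or.inr rfl)
          · exact .base (Or.inl hc')
        · exact hd0 m' hm'
      · rw [if_neg hcond] at h'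
        rw [hrun_err c x LF D _ (by simp)] at h'
        exact absurd (congrArg Prod.snd h') (by simp)
    · rw [hstep_rule _ _ _ htag] at h'
      by_cases hcond : l ≠ [] ∧ (∀ m ∈ l.tail, m ∈ d0) ∧ (evaln k c (encode l)).isSome = true
      · rw [if_pos hcond] at h'
        rcases l with - | ⟨n₀, t⟩
        · exact absurd rfl hcond.1
        · refine ih _ _ h' ?_
          intro m' hm'
          rcases List.mem_cons.1 hm' with rfl | hm'
          · exact .step ((hc (m' :: t)).2 ⟨k, hcond.2.2⟩)
              fun m hm => hd0 m (hcond.2.1 m (by simpa using hm))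
          · exact hd0 m' hm'
      · rw [if_neg hcond] at h'
        rw [hrun_err c x LF D _ (by simp)] at h'
        exact absurd (congrArg Prod.snd h') (by simp)

/-! ### Completeness -/

theorem hrun_complete {S : Set (List ℕ)} {X : Set ℕ} {c : Code} {x : ℕ}
    (hc : ∀ l : List ℕ, l ∈ S ↔ ∃ k, (evaln k c (encode l)).isSome = true)
    {a : ℕ} (h : Derives S (X ∪ {x}) a) :
    ∃ (D : List HEntry) (F : List ℕ), (∀ m ∈ F, m ∈ X) ∧
      ∀ (LF d0 : List ℕ), (∀ m ∈ F, m ∈ LF) →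
        ∃ d1, hrun c x LF D (d0, 0) = (d1, 0) ∧ a ∈ d1 ∧ ∀ m ∈ d0, m ∈ d1 := by
  induction h with
  | @base n hn =>
    rcases hn with hn | hn
    · refine ⟨[(0, [], n)], [n], by simpa using hn, fun LF d0 hF => ?_⟩
      have hcond : n = x ∨ n ∈ LF := Or.inr (hF n (by simp))
      refine ⟨n :: d0, ?_, by simp, fun m hm => by simp [hm]⟩
      show hstep c x LF (d0, 0) (0, [], n) = (n :: d0, 0)
      rw [hstep_leaf, if_pos hcond]
    · refine ⟨[(0, [], n)], [], by simp, fun LF d0 _ => ?_⟩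
      have hcond : n = x ∨ n ∈ LF := Or.inl hn
      refine ⟨n :: d0, ?_, by simp, fun m hm => by simp [hm]⟩
      show hstep c x LF (d0, 0) (0, [], n) = (n :: d0, 0)
      rw [hstep_leaf, if_pos hcond]
  | @step n₀ t hl _ ih =>
    have key : ∀ t' : List ℕ, (∀ m ∈ t', m ∈ t) →
        ∃ (D : List HEntry) (F : List ℕ), (∀ m ∈ F, m ∈ X) ∧
          ∀ (LF d0 : List ℕ), (∀ m ∈ F, m ∈ LF) →
            ∃ d1, hrun c x LF D (d0, 0) = (d1, 0) ∧ (∀ m ∈ t', m ∈ d1) ∧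
              ∀ m ∈ d0, m ∈ d1 := by
      intro t'
      induction t' with
      | nil => exact fun _ => ⟨[], [], by simp, fun LF d0 _ => ⟨d0, rfl, by simp, fun _ h => h⟩⟩
      | cons m t' iht =>
        intro hsub
        obtain ⟨Dm, Fm, hFm, hm⟩ := ih m (hsub m (by simp))
        obtain ⟨D', F', hF', h'⟩ := iht fun m hm => hsub m (by simp [hm])
        refine ⟨Dm ++ D', Fm ++ F', ?_, fun LF d0 hF => ?_⟩
        · intro m hm; rcases List.mem_append.1 hm with h | h
          · exact hFm m h
          · exact hF' m h
        · obtain ⟨d1, hd1, hmd1, hsub1⟩ := hm LF d0 fun m hm => hF m (by simp [hm])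
          obtain ⟨d2, hd2, htd2, hsub2⟩ := h' LF d1 fun m hm => hF m (by simp [hm])
          refine ⟨d2, ?_, ?_, fun m hm => hsub2 m (hsub1 m hm)⟩
          · rw [hrun, List.foldl_append]; rw [hrun] at hd1 hd2; rw [hd1]; exact hd2
          · intro m hm
            rcases List.mem_cons.1 hm with rfl | hm
            · exact hsub2 m hmd1
            · exact htd2 m hm
    obtain ⟨Dt, Ft, hFt, ht⟩ := key t fun _ h => h
    obtain ⟨k, hk⟩ := (hc (n₀ :: t)).1 hl
    refine ⟨Dt ++ [(1, n₀ :: t, k)], Ft, hFt, fun LF d0 hF => ?_⟩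
    obtain ⟨d1, hd1, htd1, hsub1⟩ := ht LF d0 hF
    have hcond : (n₀ :: t) ≠ [] ∧ (∀ m ∈ (n₀ :: t).tail, m ∈ d1) ∧
        (evaln k c (encode (n₀ :: t))).isSome = true :=
      ⟨by simp, by simpa using htd1, hk⟩
    refine ⟨n₀ :: d1, ?_, by simp, fun m hm => by simp [hsub1 m hm]⟩
    rw [hrun, List.foldl_append]
    rw [hrun] at hd1; rw [hd1]
    show hstep c x LF (d1, 0) (1, n₀ :: t, k) = (n₀ :: d1, 0)
    rw [hstep_rule _ _ _ (by norm_num), if_pos hcond]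
    rfl

/-! ### Computability -/

theorem mem_primrec : PrimrecPred fun p : ℕ × List ℕ => p.1 ∈ p.2 := by
  have h : Primrec fun p : ℕ × List ℕ => decide (List.idxOf p.1 p.2 < p.2.length) :=
    PrimrecPred.decide (PrimrecRel.comp Primrec.nat_lt
      (Primrec.list_idxOf.comp Primrec.fst Primrec.snd)
      (Primrec.list_length.comp Primrec.snd))
  exact Primrec.primrecPred (h.of_eq fun p => by rw [decide_eq_decide]; exact List.idxOf_lt_length_iff)

theorem ball_mem_primrec : PrimrecPred fun p : List ℕ × List ℕ => ∀ m ∈ p.1, m ∈ p.2 := by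
  have hstep0 : Primrec₂ fun (p : List ℕ × List ℕ) (q : Bool × ℕ) =>
      (bif q.1 then decide (q.2 ∈ p.2) else false) := by
    have H : Primrec fun z : (List ℕ × List ℕ) × Bool × ℕ =>
        (bif z.2.1 then decide (z.2.2 ∈ z.1.2) else false) :=
      Primrec.cond (Primrec.fst.comp Primrec.snd)
        (PrimrecPred.decide (mem_primrec.comp ((Primrec.snd.comp Primrec.snd).pair (Primrec.snd.comp Primrec.fst))))
        (Primrec.const false)
    exact H.to₂
  have hfold := Primrec.list_foldl Primrec.fst (Primrec.const true) hstep0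
  have key : ∀ (l L : List ℕ) (acc : Bool),
      l.foldl (fun acc m => bif acc then decide (m ∈ L) else false) acc =
        (acc && decide (∀ m ∈ l, m ∈ L)) := by
    intro l L
    induction l with
    | nil => simp
    | cons m l ih =>
      intro acc
      rw [List.foldl_cons, ih]
      by_cases h : m ∈ L <;> cases acc <;> simp [h] <;> tauto
  exact Primrec.primrecPred (hfold.of_eq fun p => (key p.1 p.2 true).trans (Bool.true_and _))

private abbrev Ar : Type := ℕ × (ℕ × List HEntry)

theorem raiseSet_primrec : Primrec raiseSet := by
  have hstep0 : Primrec₂ fun (_ : List ℕ) (q : (List ℕ × ℕ) × ℕ) =>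
      (((q.2 + q.1.2) :: q.1.1, q.2 + q.1.2 + 1) : List ℕ × ℕ) := by
    have hsum : Primrec fun z : List ℕ × (List ℕ × ℕ) × ℕ => z.2.2 + z.2.1.2 :=
      Primrec.nat_add.comp (Primrec.snd.comp Primrec.snd)
        (Primrec.snd.comp (Primrec.fst.comp Primrec.snd))
    exact ((Primrec.list_cons.comp hsum (Primrec.fst.comp (Primrec.fst.comp Primrec.snd))).pair
      (Primrec.succ.comp hsum)).to₂
  have hfold := Primrec.list_foldl Primrec.id (Primrec.const (([], 0) : List ℕ × ℕ)) hstep0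
  exact (Primrec.fst.comp hfold).of_eq fun l => rfl

theorem hfun_primrec (c : Code) (b : ℕ) : Primrec (hfun c b) := by
  have hLF : Primrec fun a : Ar => raiseSet (Denumerable.ofNat (List ℕ) a.2.1) :=
    raiseSet_primrec.comp ((Primrec.ofNat (List ℕ)).comp (Primrec.fst.comp Primrec.snd))
  -- the step function
  have hstepP : Primrec₂ fun (a : Ar) (p : (List ℕ × ℕ) × HEntry) =>
      hstep c a.1 (raiseSet (Denumerable.ofNat (List ℕ) a.2.1)) p.1 p.2 := by
    have hx : Primrec fun z : Ar × (List ℕ × ℕ) × HEntry => z.1.1 :=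
      Primrec.fst.comp Primrec.fst
    have hLF' : Primrec fun z : Ar × (List ℕ × ℕ) × HEntry =>
        raiseSet (Denumerable.ofNat (List ℕ) z.1.2.1) := hLF.comp Primrec.fst
    have hs : Primrec fun z : Ar × (List ℕ × ℕ) × HEntry => z.2.1 :=
      Primrec.fst.comp Primrec.snd
    have hder : Primrec fun z : Ar × (List ℕ × ℕ) × HEntry => z.2.1.1 := Primrec.fst.comp hs
    have herr : Primrec fun z : Ar × (List ℕ × ℕ) × HEntry => z.2.1.2 := Primrec.snd.comp hs
    have htag : Primrec fun z : Ar × (List ℕ × ℕ) × HEntry => z.2.2.1 :=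
      Primrec.fst.comp (Primrec.snd.comp Primrec.snd)
    have hl : Primrec fun z : Ar × (List ℕ × ℕ) × HEntry => z.2.2.2.1 :=
      Primrec.fst.comp (Primrec.snd.comp (Primrec.snd.comp Primrec.snd))
    have hk : Primrec fun z : Ar × (List ℕ × ℕ) × HEntry => z.2.2.2.2 :=
      Primrec.snd.comp (Primrec.snd.comp (Primrec.snd.comp Primrec.snd))
    have hc1 : PrimrecPred fun z : Ar × (List ℕ × ℕ) × HEntry => z.2.1.2 = 0 :=
      PrimrecRel.comp Primrec.eq herr (Primrec.const 0)
    have hc2 : PrimrecPred fun z : Ar × (List ℕ × ℕ) × HEntry => z.2.2.1 = 0 :=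
      PrimrecRel.comp Primrec.eq htag (Primrec.const 0)
    have hc3 : PrimrecPred fun z : Ar × (List ℕ × ℕ) × HEntry =>
        z.2.2.2.2 = z.1.1 ∨ z.2.2.2.2 ∈ raiseSet (Denumerable.ofNat (List ℕ) z.1.2.1) :=
      PrimrecPred.or (PrimrecRel.comp Primrec.eq hk hx) (mem_primrec.comp (hk.pair hLF'))
    have hc4 : PrimrecPred fun z : Ar × (List ℕ × ℕ) × HEntry =>
        z.2.2.2.1 ≠ [] ∧ (∀ m ∈ z.2.2.2.1.tail, m ∈ z.2.1.1) ∧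
          (evaln z.2.2.2.2 c (encode z.2.2.2.1)).isSome = true := by
      refine PrimrecPred.and (PrimrecPred.not (PrimrecRel.comp Primrec.eq hl
        (Primrec.const ([] : List ℕ)))) (PrimrecPred.and ?_ ?_)
      · exact ball_mem_primrec.comp ((Primrec.list_tail.comp hl).pair hder)
      · have hev : Primrec fun z : Ar × (List ℕ × ℕ) × HEntry =>
            (evaln z.2.2.2.2 c (encode z.2.2.2.1)).isSome :=
          Primrec.option_isSome.comp (primrec_evaln.comp ((hk.pair (Primrec.const c)).pair
            (Primrec.encode.comp hl)))
        exact PrimrecRel.comp Primrec.eq hev (Primrec.const true)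
    have H : Primrec fun z : Ar × (List ℕ × ℕ) × HEntry =>
        if z.2.1.2 = 0 then
          if z.2.2.1 = 0 then
            if z.2.2.2.2 = z.1.1 ∨ z.2.2.2.2 ∈ raiseSet (Denumerable.ofNat (List ℕ) z.1.2.1) then
              (z.2.2.2.2 :: z.2.1.1, 0)
            else (z.2.1.1, 1)
          else
            if z.2.2.2.1 ≠ [] ∧ (∀ m ∈ z.2.2.2.1.tail, m ∈ z.2.1.1) ∧
                (evaln z.2.2.2.2 c (encode z.2.2.2.1)).isSome = true then
              (z.2.2.2.1.headI :: z.2.1.1, 0)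
            else (z.2.1.1, 1)
        else z.2.1 := by
      refine Primrec.ite hc1 (Primrec.ite hc2 (Primrec.ite hc3 ?_ ?_) (Primrec.ite hc4 ?_ ?_)) hs
      · exact (Primrec.list_cons.comp hk hder).pair (Primrec.const 0)
      · exact hder.pair (Primrec.const 1)
      · exact (Primrec.list_cons.comp (Primrec.list_headI.comp hl) hder).pair (Primrec.const 0)
      · exact hder.pair (Primrec.const 1)
    exact H.to₂.of_eq fun a p => by simp only [hstep]
  have hrunP : Primrec fun a : Ar =>
      hrun c a.1 (raiseSet (Denumerable.ofNat (List ℕ) a.2.1)) a.2.2 ([], 0) := by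
    have := Primrec.list_foldl (Primrec.snd.comp Primrec.snd)
      (Primrec.const (([], 0) : List ℕ × ℕ)) hstepP
    exact this.of_eq fun a => rfl
  have hpost : Primrec fun a : Ar =>
      if (hrun c a.1 (raiseSet (Denumerable.ofNat (List ℕ) a.2.1)) a.2.2 ([], 0)).2 = 0 ∧
          b ∈ (hrun c a.1 (raiseSet (Denumerable.ofNat (List ℕ) a.2.1)) a.2.2 ([], 0)).1 then
        some (Denumerable.ofNat (Finset ℕ) a.2.1)
      else none := by
    refine Primrec.ite (PrimrecPred.and
      (PrimrecRel.comp Primrec.eq (Primrec.snd.comp hrunP) (Primrec.const 0))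
      (mem_primrec.comp ((Primrec.const b).pair (Primrec.fst.comp hrunP)))) ?_ (Primrec.const none)
    exact Primrec.option_some.comp ((Primrec.ofNat (Finset ℕ)).comp
      (Primrec.fst.comp Primrec.snd))
  have hg : Primrec₂ fun (p : ℕ × ℕ) (q : ℕ × List HEntry) =>
      if (hrun c p.1 (raiseSet (Denumerable.ofNat (List ℕ) q.1)) q.2 ([], 0)).2 = 0 ∧
          b ∈ (hrun c p.1 (raiseSet (Denumerable.ofNat (List ℕ) q.1)) q.2 ([], 0)).1 then
        some (Denumerable.ofNat (Finset ℕ) q.1)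
      else none :=
    (hpost.comp ((Primrec.fst.comp Primrec.fst).pair Primrec.snd)).to₂
  have := Primrec.option_bind (Primrec.decode.comp Primrec.snd) hg
  exact this.of_eq fun p => rfl

theorem hfun_eval (c : Code) (b x nF : ℕ) (D : List HEntry) :
    hfun c b (x, encode ((nF, D) : ℕ × List HEntry)) =
      (if (hrun c x (raiseSet (Denumerable.ofNat (List ℕ) nF)) D ([], 0)).2 = 0 ∧
          b ∈ (hrun c x (raiseSet (Denumerable.ofNat (List ℕ) nF)) D ([], 0)).1 then
        some (Denumerable.ofNat (Finset ℕ) nF)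
      else none) := by
  show (Encodable.decode (α := ℕ × List HEntry) (encode ((nF, D) : ℕ × List HEntry))).bind _ = _
  rw [encodek, Option.bind_some]

end QVAux

open QVAux Encodable Denumerable Nat.Partrec.Code

/-- If `X` is maximal in an r.e. quasivariety, then `Xᶜ ≤ₑ X`. -/
theorem compl_enumRed_of_maximal (S : Set (List ℕ))
    (hne : ∀ l ∈ S, l ≠ []) (hS : REPred (· ∈ S))
    (X : Set ℕ) (hX : QVMaximal S X) :
    EnumRed Xᶜ X := by
  by_cases hXu : X = Set.univ
  · refine ⟨fun _ => none, Computable.const none, fun x => ?_⟩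
    subst hXu
    simp
  -- pick an element outside X
  obtain ⟨b, hb⟩ := Set.ne_univ_iff_exists_notMem X |>.1 hXu
  -- extract a code for S
  have hS' : Nat.Partrec fun n => Part.bind (Encodable.decode (α := List ℕ) n) fun l =>
      (Part.assert (l ∈ S) fun _ => Part.some ()).map Encodable.encode := hS
  obtain ⟨c, hcode⟩ := Nat.Partrec.Code.exists_code.1 hS'
  have hc : ∀ l : List ℕ, l ∈ S ↔ ∃ k, (evaln k c (encode l)).isSome = true := by
    intro l
    have h1 : (eval c (encode l)).Dom ↔ l ∈ S := by
      rw [hcode]; simp [encodek, Part.assert, Part.bind]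
    rw [← h1, Part.dom_iff_mem]
    constructor
    · rintro ⟨y, hy⟩
      obtain ⟨k, hk⟩ := evaln_complete.1 hy
      exact ⟨k, Option.isSome_iff_exists.2 ⟨y, hk⟩⟩
    · rintro ⟨k, hk⟩
      obtain ⟨y, hy⟩ := Option.isSome_iff_exists.1 hk
      exact ⟨y, evaln_complete.2 ⟨k, hy⟩⟩
  -- the key equivalence
  have hkey : ∀ x : ℕ, x ∈ Xᶜ ↔ Derives S (X ∪ {x}) b := by
    intro x
    constructor
    · intro hx
      have hcl : QVclosure S (X ∪ {x}) ∈ QV S := closure_mem_QV _ _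
      have hXsub : X ⊆ QVclosure S (X ∪ {x}) :=
        fun m hm => subset_closure _ _ (Or.inl hm)
      rcases hX.2 _ hcl hXsub with h | h
      · exfalso
        have : x ∈ QVclosure S (X ∪ {x}) := subset_closure _ _ (Or.inr rfl)
        rw [h] at this
        exact hx this
      · have : b ∈ QVclosure S (X ∪ {x}) := by rw [h]; trivial
        exact mem_closure_iff.1 this
    · intro hd
      intro hx
      have hsub : X ∪ {x} ⊆ X := by
        rintro m (hm | rfl)
        · exact hm
        · exact hx
      have : QVclosure S (X ∪ {x}) ⊆ X := closure_subset hX.1 hsub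
      exact hb (this (mem_closure_iff.2 hd))
  refine ⟨hfun c b, (hfun_primrec c b).to_comp, fun x => ?_⟩
  rw [hkey x]
  constructor
  · -- completeness: a derivation gives a witness
    intro hd
    obtain ⟨D, F, hF, hrun'⟩ := hrun_complete hc hd
    obtain ⟨nF, hofNat'⟩ := (Denumerable.eqv (Finset ℕ)).symm.surjective F.toFinset
    have hofNat : Denumerable.ofNat (Finset ℕ) nF = F.toFinset := hofNat'
    have hFLF : ∀ m ∈ F, m ∈ raiseSet (Denumerable.ofNat (List ℕ) nF) := by
      intro m hm
      rw [mem_raiseSet_ofNat, hofNat]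
      exact List.mem_toFinset.2 hm
    obtain ⟨d1, hd1, hbd1, -⟩ := hrun' (raiseSet (Denumerable.ofNat (List ℕ) nF)) [] hFLF
    refine ⟨encode ((nF, D) : ℕ × List HEntry), F.toFinset, ?_, ?_⟩
    · rw [hfun_eval, hd1, if_pos (⟨rfl, hbd1⟩ :
        ((d1, 0) : List ℕ × ℕ).2 = 0 ∧ b ∈ ((d1, 0) : List ℕ × ℕ).1), hofNat]
    · intro m hm
      exact hF m (List.mem_toFinset.1 (by exact_mod_cast hm))
  · -- soundness
    rintro ⟨n, F', heq, hsub⟩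
    have heq' : (Encodable.decode (α := ℕ × List HEntry) n).bind (fun q =>
        if (hrun c x (raiseSet (Denumerable.ofNat (List ℕ) q.1)) q.2 ([], 0)).2 = 0 ∧
            b ∈ (hrun c x (raiseSet (Denumerable.ofNat (List ℕ) q.1)) q.2 ([], 0)).1 then
          some (Denumerable.ofNat (Finset ℕ) q.1)
        else none) = some F' := heq
    rcases hdec : Encodable.decode (α := ℕ × List HEntry) n with _ | q
    · rw [hdec, Option.bind_none] at heq'; cases heq'
    · rw [hdec, Option.bind_some] at heq'
      rcases hrv : hrun c x (raiseSet (Denumerable.ofNat (List ℕ) q.1)) q.2 ([], 0) with ⟨der, err⟩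
      rw [hrv] at heq'
      by_cases hcnd : err = 0 ∧ b ∈ der
      · rw [if_pos (show ((der, err) : List ℕ × ℕ).2 = 0 ∧ b ∈ ((der, err) : List ℕ × ℕ).1
          from hcnd)] at heq'
        have hF' : Denumerable.ofNat (Finset ℕ) q.1 = F' := by injection heq'
        have hrq : hrun c x (raiseSet (Denumerable.ofNat (List ℕ) q.1)) q.2 ([], 0) = (der, 0) := by
          rw [hrv, hcnd.1]
        have hder : ∀ m ∈ der,
            Derives S ({m | m ∈ raiseSet (Denumerable.ofNat (List ℕ) q.1)} ∪ {x}) m :=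
          hrun_sound hc q.2 [] der hrq (by simp)
        have hsubY : {m | m ∈ raiseSet (Denumerable.ofNat (List ℕ) q.1)} ∪ {x} ⊆ X ∪ {x} := by
          rintro m (hm | hm)
          · left
            have hmF : m ∈ Denumerable.ofNat (Finset ℕ) q.1 := mem_raiseSet_ofNat.1 hm
            rw [hF'] at hmF
            exact hsub hmF
          · right; exact hm
        exact (hder b hcnd.2).mono hsubY
      · rw [if_neg (show ¬(((der, err) : List ℕ × ℕ).2 = 0 ∧ b ∈ ((der, err) : List ℕ × ℕ).1)
          from hcnd)] at heq'
        cases heq'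
end

section
/- Let S be a recursively enumerable set of nonempty lists of natural numbers. If X is a maximal element of V(S) and X is recursively presented (in particular if X is finitely presented), then X is a computable subset of ℕ (ComputablePred (· ∈ X)). -/
open Encodable

namespace QVAux



variable {α β σ : Type*} [Primcodable α] [Primcodable β] [Primcodable σ]

theorem list_all_pr {f : α → List β} {p : α → β → Bool} (hf : Primrec f) (hp : Primrec₂ p) :
    Primrec fun a => (f a).all (p a) := by
  have h : Primrec fun a => (f a).foldr (fun b s => p a b && s) true :=
    Primrec.list_foldr hf (Primrec.const true)
      (((Primrec.dom_bool₂ (· && ·)).comp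
        (hp.comp Primrec.fst (Primrec.fst.comp Primrec.snd))
        (Primrec.snd.comp Primrec.snd)).to₂)
  refine h.of_eq fun a => ?_
  induction f a with
  | nil => rfl
  | cons b l ih => simp [List.all_cons, ih]

theorem list_any_pr {f : α → List β} {p : α → β → Bool} (hf : Primrec f) (hp : Primrec₂ p) :
    Primrec fun a => (f a).any (p a) := by
  have h : Primrec fun a => (f a).foldr (fun b s => p a b || s) false :=
    Primrec.list_foldr hf (Primrec.const false)
      (((Primrec.dom_bool₂ (· || ·)).comp
        (hp.comp Primrec.fst (Primrec.fst.comp Primrec.snd))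
        (Primrec.snd.comp Primrec.snd)).to₂)
  refine h.of_eq fun a => ?_
  induction f a with
  | nil => rfl
  | cons b l ih => simp [List.any_cons, ih]

theorem anyRange_pr {g : α → ℕ → Bool} (hg : Primrec₂ g) :
    Primrec₂ fun a k => (List.range k).any (g a) :=
  (list_any_pr (Primrec.list_range.comp Primrec.snd)
    ((hg.comp (Primrec.fst.comp Primrec.fst) Primrec.snd).to₂)).to₂





variable {α β σ : Type*} [Primcodable α] [Primcodable β] [Primcodable σ]

theorem sigma_of_re {p : α → Prop} (h : REPred p) :
    ∃ g : α → ℕ → Bool, Primrec₂ g ∧ ∀ a, p a ↔ ∃ n, g a n = true := by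
  obtain ⟨c, hc⟩ := Nat.Partrec.Code.exists_code.1 h
  refine ⟨fun a k => (Nat.Partrec.Code.evaln k c (encode a)).isSome, ?_, ?_⟩
  · exact (Primrec.option_isSome.comp <|
      Nat.Partrec.Code.primrec_evaln.comp <|
        ((Primrec.snd.pair (Primrec.const c)).pair (Primrec.encode.comp Primrec.fst))).to₂
  · intro a
    have hev : Nat.Partrec.Code.eval c (encode a) =
        (Part.assert (p a) fun _ => Part.some ()).map encode := by
      rw [hc]; simp [encodek]
    constructor
    · intro hpa
      have hx : encode () ∈ Nat.Partrec.Code.eval c (encode a) := by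
        rw [hev]; exact Part.mem_map _ (Part.mem_assert hpa (Part.mem_some _))
      obtain ⟨k, hk⟩ := Nat.Partrec.Code.evaln_complete.1 hx
      exact ⟨k, by simp [Option.isSome_iff_exists]; exact ⟨_, hk⟩⟩
    · rintro ⟨k, hk⟩
      rw [Option.isSome_iff_exists] at hk
      obtain ⟨x, hx⟩ := hk
      have hx' : x ∈ Nat.Partrec.Code.eval c (encode a) :=
        Nat.Partrec.Code.evaln_complete.2 ⟨k, hx⟩
      rw [hev] at hx'
      obtain ⟨u, hu, -⟩ := (Part.mem_map_iff _).1 hx'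
      exact (Part.mem_assert_iff.1 hu).fst

theorem re_of_sigma {p : α → Prop} {g : α → β → Bool} (hg : Primrec₂ g)
    (hspec : ∀ a, p a ↔ ∃ b, g a b = true) : REPred p := by
  classical
  let g' : α → ℕ → Bool := fun a n => ((decode (α := β) n).map (g a)).getD false
  have hg' : Primrec₂ g' := by
    have hmap : Primrec fun q : α × ℕ => (decode (α := β) q.2).map (g q.1) :=
      Primrec.option_map (Primrec.decode.comp Primrec.snd)
        ((hg.comp (Primrec.fst.comp Primrec.fst) Primrec.snd).to₂)
    exact (Primrec.option_getD.comp hmap (Primrec.const false)).to₂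
  have hspec' : ∀ a, p a ↔ ∃ n, g' a n = true := by
    intro a
    rw [hspec a]
    constructor
    · rintro ⟨b, hb⟩
      exact ⟨encode b, by simp [g', encodek, hb]⟩
    · rintro ⟨n, hn⟩
      rcases h : (decode (α := β) n) with _ | b
      · rw [show g' a n = false by simp [g', h]] at hn; exact absurd hn (by simp)
      · exact ⟨b, by simpa [g', h] using hn⟩
  have H : Partrec fun a => (Nat.rfind fun n => (g' a : ℕ →. Bool) n).map fun _ => () :=
    (Partrec.rfind (hg'.to_comp.partrec₂)).map
      (((Computable.const ()).comp Computable.fst).to₂)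
  refine H.of_eq fun a => Part.ext fun x => ?_
  cases x
  simp only [Part.mem_map_iff, Part.mem_assert_iff, Part.mem_some_iff]
  constructor
  · rintro ⟨n, hn, -⟩
    have := Nat.rfind_spec hn
    simp only [PFun.coe_val, Part.mem_some_iff] at this
    exact ⟨(hspec' a).2 ⟨n, this.symm⟩, trivial⟩
  · rintro ⟨hpa, -⟩
    obtain ⟨n, hn⟩ := (hspec' a).1 hpa
    obtain ⟨m, hm, -⟩ := Nat.rfind_min' (p := g' a) hn
    exact ⟨m, hm, trivial⟩

theorem re_of_primrec_bool {h : α → Bool} (hh : Primrec h) : REPred fun a => h a = true :=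
  re_of_sigma (β := ℕ) (g := fun a _ => h a) ((hh.comp Primrec.fst).to₂)
    (fun a => ⟨fun H => ⟨0, H⟩, fun ⟨_, H⟩ => H⟩)

theorem re_comp {q : β → Prop} {f : α → β} (hq : REPred q) (hf : Computable f) :
    REPred fun a => q (f a) :=
  Partrec.comp hq hf

theorem re_exists {q : α × β → Prop} (hq : REPred q) : REPred fun a => ∃ b, q (a, b) := by
  obtain ⟨g, hg, hs⟩ := sigma_of_re hq
  refine re_of_sigma (β := β × ℕ) (g := fun a bn => g (a, bn.1) bn.2) ?_ ?_
  · exact (hg.comp ((Primrec.fst).pair (Primrec.fst.comp Primrec.snd))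
      (Primrec.snd.comp Primrec.snd)).to₂
  · intro a
    constructor
    · rintro ⟨b, hb⟩
      obtain ⟨n, hn⟩ := (hs (a, b)).1 hb
      exact ⟨(b, n), hn⟩
    · rintro ⟨⟨b, n⟩, h⟩
      exact ⟨b, (hs (a, b)).2 ⟨n, h⟩⟩

theorem re_or {q r : α → Prop} (hq : REPred q) (hr : REPred r) :
    REPred fun a => q a ∨ r a := by
  obtain ⟨g₁, hg₁, hs₁⟩ := sigma_of_re hq
  obtain ⟨g₂, hg₂, hs₂⟩ := sigma_of_re hr
  refine re_of_sigma (β := ℕ) (g := fun a n => g₁ a n || g₂ a n)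
    (((Primrec.dom_bool₂ (· || ·)).comp (hg₁.comp Primrec.fst Primrec.snd)
      (hg₂.comp Primrec.fst Primrec.snd)).to₂) fun a => ?_
  rw [hs₁ a, hs₂ a]
  constructor
  · rintro (⟨n, hn⟩ | ⟨n, hn⟩) <;> exact ⟨n, by simp [hn]⟩
  · rintro ⟨n, hn⟩
    rcases Bool.or_eq_true_iff.1 hn with h | h
    · exact Or.inl ⟨n, h⟩
    · exact Or.inr ⟨n, h⟩

theorem re_and {q r : α → Prop} (hq : REPred q) (hr : REPred r) :
    REPred fun a => q a ∧ r a := by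
  obtain ⟨g₁, hg₁, hs₁⟩ := sigma_of_re hq
  obtain ⟨g₂, hg₂, hs₂⟩ := sigma_of_re hr
  refine re_of_sigma (β := ℕ × ℕ)
    (g := fun a nm => g₁ a nm.1 && g₂ a nm.2)
    (((Primrec.dom_bool₂ (· && ·)).comp
      (hg₁.comp Primrec.fst (Primrec.fst.comp Primrec.snd))
      (hg₂.comp Primrec.fst (Primrec.snd.comp Primrec.snd))).to₂) fun a => ?_
  rw [hs₁ a, hs₂ a]
  constructor
  · rintro ⟨⟨n, hn⟩, ⟨m, hm⟩⟩
    exact ⟨(n, m), by simp [hn, hm]⟩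
  · rintro ⟨⟨n, m⟩, h⟩
    rcases Bool.and_eq_true_iff.1 h with ⟨h₁, h₂⟩
    exact ⟨⟨n, h₁⟩, ⟨m, h₂⟩⟩

private theorem exists_bound {P : ℕ → ℕ → Prop} :
    ∀ n, (∀ i < n, ∃ j, P i j) → ∃ k, ∀ i < n, ∃ j < k, P i j := by
  intro n
  induction n with
  | zero => exact fun _ => ⟨0, fun i hi => absurd hi (by omega)⟩
  | succ n ih =>
    intro h
    obtain ⟨k₁, hk₁⟩ := ih fun i hi => h i (by omega)
    obtain ⟨j, hj⟩ := h n (by omega)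
    refine ⟨max k₁ (j + 1), fun i hi => ?_⟩
    rcases Nat.lt_succ_iff_lt_or_eq.1 hi with hi | rfl
    · obtain ⟨j', hj', hp⟩ := hk₁ i hi
      exact ⟨j', by omega, hp⟩
    · exact ⟨j, by omega, hj⟩

theorem re_ball {q : α × ℕ → Prop} (hq : REPred q) :
    REPred fun p : α × ℕ => ∀ i < p.2, q (p.1, i) := by
  obtain ⟨g, hg, hs⟩ := sigma_of_re hq
  have hG : Primrec₂ fun (z : ((α × ℕ) × ℕ) × ℕ) (j : ℕ) => g (z.1.1.1, z.2) j :=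
    (hg.comp ((Primrec.fst.comp (Primrec.fst.comp (Primrec.fst.comp Primrec.fst))).pair
      (Primrec.snd.comp Primrec.fst)) Primrec.snd).to₂
  refine re_of_sigma (β := ℕ)
    (g := fun p k => (List.range p.2).all fun i => (List.range k).any fun j => g (p.1, i) j)
    ?_ fun p => ?_
  · have hp : Primrec₂ fun (x : (α × ℕ) × ℕ) (i : ℕ) =>
        (List.range x.2).any fun j => g (x.1.1, i) j :=
      ((anyRange_pr hG).comp Primrec.id (Primrec.snd.comp Primrec.fst)).to₂
    have hall : Primrec fun (x : (α × ℕ) × ℕ) =>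
        (List.range x.1.2).all fun i => (List.range x.2).any fun j => g (x.1.1, i) j :=
      list_all_pr (Primrec.list_range.comp (Primrec.snd.comp Primrec.fst)) hp
    exact hall.to₂
  · constructor
    · intro h
      obtain ⟨k, hk⟩ := exists_bound p.2 fun i hi => (hs (p.1, i)).1 (h i hi)
      refine ⟨k, List.all_eq_true.2 fun i hi => ?_⟩
      obtain ⟨j, hj, hgj⟩ := hk i (List.mem_range.1 hi)
      exact List.any_eq_true.2 ⟨j, List.mem_range.2 hj, hgj⟩
    · rintro ⟨k, hk⟩ i hi
      obtain ⟨j, -, hj⟩ := List.any_eq_true.1 (List.all_eq_true.1 hk i (List.mem_range.2 hi))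
      exact (hs (p.1, i)).2 ⟨j, hj⟩



inductive HDeriv (S : Set (List ℕ)) (B : Set ℕ) : ℕ → Prop
  | base {n} : n ∈ B → HDeriv S B n
  | step {n t} : (n :: t) ∈ S → (∀ m ∈ t, HDeriv S B m) → HDeriv S B n

theorem subset_QVclosure (S : Set (List ℕ)) (B : Set ℕ) : B ⊆ QVclosure S B :=
  fun b hb => Set.mem_sInter.2 fun _ hX => hX.2 hb

theorem QVclosure_mem_QV (S : Set (List ℕ)) (B : Set ℕ) : QVclosure S B ∈ QV S :=
  fun n₀ t ht hall => Set.mem_sInter.2 fun X hX =>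
    hX.1 n₀ t ht fun m hm => Set.mem_sInter.1 (hall m hm) X hX

theorem QVclosure_min {S : Set (List ℕ)} {B X : Set ℕ} (hX : X ∈ QV S) (hBX : B ⊆ X) :
    QVclosure S B ⊆ X :=
  Set.sInter_subset_of_mem ⟨hX, hBX⟩

theorem QVclosure_eq (S : Set (List ℕ)) (B : Set ℕ) :
    QVclosure S B = {n | HDeriv S B n} := by
  apply subset_antisymm
  · exact QVclosure_min (fun n₀ t ht hall => HDeriv.step ht hall) (fun b hb => HDeriv.base hb)
  · intro n hn
    refine Set.mem_sInter.2 fun X hX => ?_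
    induction hn with
    | base h => exact hX.2 h
    | step hs _ ih => exact hX.1 _ _ hs ih

/-- A derivation chain: each entry is either in the base set or the head of a rule
whose premises occur earlier in the chain. -/
def Chain (S : Set (List ℕ)) (B : Set ℕ) (L : List ℕ) : Prop :=
  ∀ i < L.length, L.getD i 0 ∈ B ∨
    ∃ t : List ℕ, (L.getD i 0 :: t) ∈ S ∧ ∀ m ∈ t, ∃ j < i, L.getD j 0 = m

theorem getD_append_left {L₁ L₂ : List ℕ} {i : ℕ} (h : i < L₁.length) :
    (L₁ ++ L₂).getD i 0 = L₁.getD i 0 := by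
  simp [List.getD_eq_getElem?_getD, List.getElem?_append_left h]

theorem getD_append_right {L₁ L₂ : List ℕ} {i : ℕ} (h : L₁.length ≤ i) :
    (L₁ ++ L₂).getD i 0 = L₂.getD (i - L₁.length) 0 := by
  simp [List.getD_eq_getElem?_getD, List.getElem?_append_right h]

theorem mem_iff_getD {L : List ℕ} {n : ℕ} :
    n ∈ L ↔ ∃ j < L.length, L.getD j 0 = n := by
  constructor
  · intro h
    obtain ⟨j, hj, hje⟩ := List.mem_iff_getElem.1 h
    exact ⟨j, hj, by rw [List.getD_eq_getElem?_getD, List.getElem?_eq_getElem hj]; exact hje⟩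
  · rintro ⟨j, hj, rfl⟩
    rw [List.getD_eq_getElem?_getD, List.getElem?_eq_getElem hj]
    exact List.getElem_mem hj

theorem chain_append {S : Set (List ℕ)} {B : Set ℕ} {L₁ L₂ : List ℕ}
    (h₁ : Chain S B L₁) (h₂ : Chain S B L₂) : Chain S B (L₁ ++ L₂) := by
  intro i hi
  rcases lt_or_ge i L₁.length with h | h
  · rw [getD_append_left h]
    rcases h₁ i h with hb | ⟨t, ht, hprev⟩
    · exact Or.inl hb
    · refine Or.inr ⟨t, ht, fun m hm => ?_⟩
      obtain ⟨j, hj, hje⟩ := hprev m hm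
      exact ⟨j, hj, by rw [getD_append_left (lt_trans hj h)]; exact hje⟩
  · rw [getD_append_right h]
    have hi₂ : i - L₁.length < L₂.length := by
      simp [List.length_append] at hi; omega
    rcases h₂ _ hi₂ with hb | ⟨t, ht, hprev⟩
    · exact Or.inl hb
    · refine Or.inr ⟨t, ht, fun m hm => ?_⟩
      obtain ⟨j, hj, hje⟩ := hprev m hm
      refine ⟨L₁.length + j, by omega, ?_⟩
      rw [getD_append_right (by omega)]
      simpa using hje

theorem chain_deriv {S : Set (List ℕ)} {B : Set ℕ} {L : List ℕ} (hL : Chain S B L) :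
    ∀ i < L.length, HDeriv S B (L.getD i 0) := by
  intro i
  induction i using Nat.strong_induction_on with
  | _ i ih =>
    intro hi
    rcases hL i hi with hb | ⟨t, ht, hprev⟩
    · exact HDeriv.base hb
    · refine HDeriv.step ht fun m hm => ?_
      obtain ⟨j, hj, hje⟩ := hprev m hm
      exact hje ▸ ih j hj (lt_trans hj hi)

theorem chains_combine {S : Set (List ℕ)} {B : Set ℕ} :
    ∀ t : List ℕ, (∀ m ∈ t, ∃ L, Chain S B L ∧ m ∈ L) →
      ∃ L, Chain S B L ∧ ∀ m ∈ t, m ∈ L := by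
  intro t
  induction t with
  | nil => exact fun _ => ⟨[], fun i hi => absurd hi (by simp), by simp⟩
  | cons m t ih =>
    intro h
    obtain ⟨L₁, hL₁, hm₁⟩ := h m (by simp)
    obtain ⟨L₂, hL₂, hm₂⟩ := ih fun m' hm' => h m' (by simp [hm'])
    refine ⟨L₁ ++ L₂, chain_append hL₁ hL₂, fun m' hm' => ?_⟩
    rcases List.mem_cons.1 hm' with rfl | hm'
    · exact List.mem_append_left _ hm₁
    · exact List.mem_append_right _ (hm₂ m' hm')

theorem deriv_chain {S : Set (List ℕ)} {B : Set ℕ} {n : ℕ} (h : HDeriv S B n) :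
    ∃ L, Chain S B L ∧ n ∈ L := by
  induction h with
  | @base n hb =>
    refine ⟨[n], fun i hi => ?_, by simp⟩
    simp only [List.length_singleton] at hi
    interval_cases i
    exact Or.inl (by simpa using hb)
  | @step n t ht _ ih =>
    obtain ⟨L₀, hL₀, hsub⟩ := chains_combine t ih
    refine ⟨L₀ ++ [n], ?_, by simp⟩
    intro i hi
    simp only [List.length_append, List.length_singleton] at hi
    rcases lt_or_ge i L₀.length with h' | h'
    · rw [getD_append_left h']
      rcases hL₀ i h' with hb | ⟨t', ht', hprev⟩
      · exact Or.inl hb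
      · refine Or.inr ⟨t', ht', fun m hm => ?_⟩
        obtain ⟨j, hj, hje⟩ := hprev m hm
        exact ⟨j, hj, by rw [getD_append_left (lt_trans hj h')]; exact hje⟩
    · have : i = L₀.length := by omega
      subst this
      rw [getD_append_right le_rfl, Nat.sub_self]
      refine Or.inr ⟨t, by simpa using ht, fun m hm => ?_⟩
      obtain ⟨j, hj, hje⟩ := mem_iff_getD.1 (hsub m hm)
      exact ⟨j, hj, by rw [getD_append_left hj]; exact hje⟩

theorem deriv_iff_chain {S : Set (List ℕ)} {B : Set ℕ} {n : ℕ} :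
    HDeriv S B n ↔ ∃ L, Chain S B L ∧ n ∈ L := by
  constructor
  · exact deriv_chain
  · rintro ⟨L, hL, hn⟩
    obtain ⟨j, hj, rfl⟩ := mem_iff_getD.1 hn
    exact chain_deriv hL j hj

theorem mem_QVclosure_iff_chain {S : Set (List ℕ)} {B : Set ℕ} {n : ℕ} :
    n ∈ QVclosure S B ↔ ∃ L, Chain S B L ∧ n ∈ L := by
  rw [QVclosure_eq]; exact deriv_iff_chain



variable {α : Type*} [Primcodable α]

theorem bool_mem (L : List ℕ) (i n : ℕ) :
    ((List.range i).any fun j => L.getD j 0 == n) = true ↔ ∃ j < i, L.getD j 0 = n := by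
  simp [List.any_eq_true, List.mem_range]

set_option maxHeartbeats 2000000 in
theorem re_closure {S : Set (List ℕ)} (hS : REPred (· ∈ S))
    {B : α → ℕ → Prop} (hB : REPred fun p : α × ℕ => B p.1 p.2) :
    REPred fun p : α × ℕ => p.2 ∈ QVclosure S {m | B p.1 m} := by
  -- γ = (α × ℕ) × List ℕ ; certificates are lists L
  -- Step predicate on (γ × ℕ)
  have left_re : REPred fun x : ((α × ℕ) × List ℕ) × ℕ =>
      B x.1.1.1 (x.1.2.getD x.2 0) := by
    have hf : Computable fun x : ((α × ℕ) × List ℕ) × ℕ =>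
        (x.1.1.1, x.1.2.getD x.2 0) :=
      (Computable.fst.comp (Computable.fst.comp Computable.fst)).pair
        (((Primrec.list_getD 0).to_comp).comp (Computable.snd.comp Computable.fst)
          Computable.snd)
    exact re_comp hB hf
  have inner_re : REPred fun y : (((α × ℕ) × List ℕ) × ℕ) × List ℕ =>
      (y.1.1.2.getD y.1.2 0 :: y.2) ∈ S ∧
        (y.2.all fun m => (List.range y.1.2).any fun j => y.1.1.2.getD j 0 == m) = true := by
    refine re_and (re_comp hS ?_) (re_of_primrec_bool ?_)
    · exact (Primrec.list_cons.to_comp).comp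
        (((Primrec.list_getD 0).to_comp).comp
          (Computable.snd.comp (Computable.fst.comp Computable.fst))
          (Computable.snd.comp Computable.fst))
        Computable.snd
    · have hgz : Primrec₂ fun (z : ((((α × ℕ) × List ℕ) × ℕ) × List ℕ) × ℕ) (j : ℕ) =>
          z.1.1.1.2.getD j 0 == z.2 :=
        (Primrec.beq.comp
          ((Primrec.list_getD 0).comp
            (Primrec.snd.comp (Primrec.fst.comp (Primrec.fst.comp
              (Primrec.fst.comp Primrec.fst))))
            Primrec.snd)
          (Primrec.snd.comp Primrec.fst)).to₂
      have hp : Primrec₂ fun (y : (((α × ℕ) × List ℕ) × ℕ) × List ℕ) (m : ℕ) =>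
          (List.range y.1.2).any fun j => y.1.1.2.getD j 0 == m :=
        ((anyRange_pr hgz).comp Primrec.id
          (Primrec.snd.comp (Primrec.fst.comp Primrec.fst))).to₂
      exact list_all_pr Primrec.snd hp
  have step_re : REPred fun x : ((α × ℕ) × List ℕ) × ℕ =>
      B x.1.1.1 (x.1.2.getD x.2 0) ∨
        ∃ t : List ℕ, (x.1.2.getD x.2 0 :: t) ∈ S ∧
          (t.all fun m => (List.range x.2).any fun j => x.1.2.getD j 0 == m) = true :=
    re_or left_re (re_exists inner_re)
  have ball_re := re_ball step_re
  have chain_re : REPred fun w : (α × ℕ) × List ℕ =>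
      ∀ i < w.2.length,
        (B w.1.1 (w.2.getD i 0) ∨
          ∃ t : List ℕ, (w.2.getD i 0 :: t) ∈ S ∧
            (t.all fun m => (List.range i).any fun j => w.2.getD j 0 == m) = true) :=
    re_comp ball_re (Computable.id.pair ((Primrec.list_length.to_comp).comp Computable.snd))
  have mem_re : REPred fun w : (α × ℕ) × List ℕ =>
      ((List.range w.2.length).any fun j => w.2.getD j 0 == w.1.2) = true := by
    refine re_of_primrec_bool ?_
    have hgm : Primrec₂ fun (w : (α × ℕ) × List ℕ) (j : ℕ) => w.2.getD j 0 == w.1.2 :=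
      (Primrec.beq.comp
        ((Primrec.list_getD 0).comp (Primrec.snd.comp Primrec.fst) Primrec.snd)
        (Primrec.snd.comp (Primrec.fst.comp Primrec.fst))).to₂
    exact (anyRange_pr hgm).comp Primrec.id (Primrec.list_length.comp Primrec.snd)
  have good_re := re_exists (re_and chain_re mem_re)
  refine good_re.of_eq fun p => ?_
  rw [mem_QVclosure_iff_chain]
  constructor
  · rintro ⟨L, hchain, hmem⟩
    refine ⟨L, fun i hi => ?_, ?_⟩
    · rcases hchain i hi with hb | ⟨t, ht, hall⟩
      · exact Or.inl hb
      · refine Or.inr ⟨t, ht, fun m hm => ?_⟩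
        exact (bool_mem L i m).1 (List.all_eq_true.1 hall m hm)
    · exact mem_iff_getD.2 ((bool_mem L L.length p.2).1 hmem)
  · rintro ⟨L, hchain, hmem⟩
    refine ⟨L, fun i hi => ?_, ?_⟩
    · rcases hchain i hi with hb | ⟨t, ht, hall⟩
      · exact Or.inl hb
      · exact Or.inr ⟨t, ht, List.all_eq_true.2 fun m hm =>
          (bool_mem L i m).2 (hall m hm)⟩
    · obtain ⟨j, hj, hje⟩ := mem_iff_getD.1 hmem
      exact (bool_mem L L.length p.2).2 ⟨j, hj, hje⟩


end QVAux

/-- A maximal, recursively presented point of an r.e. quasivariety is computable. -/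
theorem computable_of_maximal_recursively_presented (S : Set (List ℕ))
    (hne : ∀ l ∈ S, l ≠ []) (hS : REPred (· ∈ S))
    (X : Set ℕ) (hX : QVMaximal S X)
    (hpres : ∃ Y : Set ℕ, REPred (· ∈ Y) ∧ QVclosure S Y = X) :
    ComputablePred (· ∈ X) := by
  classical
  obtain ⟨Y, hY, hYX⟩ := hpres
  by_cases hU : X = Set.univ
  · refine ComputablePred.computable_iff.2 ⟨fun _ => true, Computable.const true, ?_⟩
    funext a
    simp [hU]
  · obtain ⟨z₀, hz₀⟩ := Set.ne_univ_iff_exists_notMem X |>.1 hU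
    -- X is r.e.
    have hXre : REPred (· ∈ X) := by
      have h1 : REPred fun p : ℕ × ℕ => (fun _ m => m ∈ Y) p.1 p.2 :=
        QVAux.re_comp hY Computable.snd
      have h2 := QVAux.re_closure hS (B := fun _ m => m ∈ Y) h1
      have h3 := QVAux.re_comp h2 (Computable.id.pair Computable.id : Computable fun x : ℕ => (x, x))
      refine h3.of_eq fun x => ?_
      have : {m | m ∈ Y} = Y := Set.setOf_mem_eq
      rw [this, hYX]
    -- the complement is r.e.
    have hXcre : REPred fun x => x ∉ X := by
      have h1 : REPred fun p : ℕ × ℕ => (fun x m => m ∈ Y ∨ m = x) p.1 p.2 := by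
        refine QVAux.re_or (QVAux.re_comp hY Computable.snd) ?_
        have : REPred fun p : ℕ × ℕ => ((p.2 == p.1) = true) :=
          QVAux.re_of_primrec_bool (Primrec.beq.comp Primrec.snd Primrec.fst)
        exact this.of_eq fun p => by simp
      have h2 := QVAux.re_closure hS (B := fun x m => m ∈ Y ∨ m = x) h1
      have h3 := QVAux.re_comp h2
        (Computable.id.pair (Computable.const z₀) : Computable fun x : ℕ => (x, z₀))
      refine h3.of_eq fun x => ?_
      show z₀ ∈ QVclosure S {m | m ∈ Y ∨ m = x} ↔ x ∉ X
      set Z := QVclosure S {m | m ∈ Y ∨ m = x} with hZ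
      have hZQV : Z ∈ QV S := QVAux.QVclosure_mem_QV S _
      have hYsub : Y ⊆ X := hYX ▸ QVAux.subset_QVclosure S Y
      have hXZ : X ⊆ Z := by
        rw [← hYX]
        exact QVAux.QVclosure_min hZQV
          (Set.Subset.trans (fun m hm => Or.inl hm) (QVAux.subset_QVclosure S _))
      constructor
      · intro hz hxX
        have hsub : Z ⊆ X := by
          refine QVAux.QVclosure_min hX.1 ?_
          rintro m (hm | rfl)
          · exact hYsub hm
          · exact hxX
        exact hz₀ (hsub hz)
      · intro hxX
        rcases hX.2 Z hZQV hXZ with h | h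
        · exact absurd (h ▸ QVAux.subset_QVclosure S _ (Or.inr rfl : x ∈ {m | m ∈ Y ∨ m = x})) hxX
        · rw [h]; trivial
    exact ComputablePred.computable_iff_re_compl_re'.2 ⟨hXre, hXcre⟩
end

section
/- Let A ⊆ ℕ with Aᶜ ≤ₑ A. Then there exists a recursively enumerable set S of nonempty lists of natural numbers such that A ∈ V(S) and A is a maximal element of V(S). -/
namespace MaxQVAux

open Encodable Denumerable

/-- Fold step computing `Denumerable.raise'`. -/
def rstep : (ℕ × List ℕ) → ℕ → ℕ × List ℕ := fun s b => (b + s.1 + 1, s.2 ++ [b + s.1])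

theorem foldl_rstep : ∀ (u : List ℕ) (n : ℕ) (acc : List ℕ),
    (u.foldl rstep (n, acc)).2 = acc ++ Denumerable.raise' u n
  | [], n, acc => by simp [Denumerable.raise']
  | b :: u, n, acc => by
    simp only [List.foldl_cons, rstep, Denumerable.raise',
      foldl_rstep u (b + n + 1) (acc ++ [b + n])]
    simp

/-- Computable version of `fun u => Denumerable.raise' u 0`. -/
def myRaise (u : List ℕ) : List ℕ := (u.foldl rstep (0, [])).2

theorem myRaise_eq (u : List ℕ) : myRaise u = Denumerable.raise' u 0 := by
  simpa [myRaise] using foldl_rstep u 0 []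

theorem primrec_myRaise : Primrec myRaise := by
  have hh : Primrec₂ (fun (_ : List ℕ) (p : (ℕ × List ℕ) × ℕ) => rstep p.1 p.2) := by
    have s1 : Primrec fun (q : List ℕ × ((ℕ × List ℕ) × ℕ)) => q.2.1.1 :=
      Primrec.fst.comp (Primrec.fst.comp Primrec.snd)
    have s2 : Primrec fun (q : List ℕ × ((ℕ × List ℕ) × ℕ)) => q.2.1.2 :=
      Primrec.snd.comp (Primrec.fst.comp Primrec.snd)
    have b : Primrec fun (q : List ℕ × ((ℕ × List ℕ) × ℕ)) => q.2.2 :=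
      Primrec.snd.comp Primrec.snd
    have hsum : Primrec fun (q : List ℕ × ((ℕ × List ℕ) × ℕ)) => q.2.2 + q.2.1.1 :=
      Primrec.nat_add.comp b s1
    exact (Primrec.succ.comp hsum).pair
      (Primrec.list_append.comp s2 (Primrec.list_cons.comp hsum (Primrec.const [])))
  have := Primrec.list_foldl (f := @id (List ℕ))
    (g := fun _ => ((0 : ℕ), ([] : List ℕ)))
    (h := fun _ p => rstep p.1 p.2) Primrec.id (Primrec.const _) hh
  exact Primrec.snd.comp this

/-- The encoding of finsets used by the `Primcodable (Finset ℕ)` instance. -/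
def fenc : Finset ℕ → ℕ := @Encodable.encode _ Primcodable.toEncodable

theorem computable_fenc : Computable fenc := Computable.encode

theorem ofNat_fenc (F : Finset ℕ) : ofNat (Finset ℕ) (fenc F) = F :=
  Denumerable.ofNat_encode F

theorem mem_ofNat_finset (k a : ℕ) :
    a ∈ ofNat (Finset ℕ) k ↔ a ∈ Denumerable.raise' (ofNat (List ℕ) k) 0 := by
  have h2 : ofNat (Finset ℕ) k =
      Finset.map (eqv ℕ).symm.toEmbedding (Denumerable.raise'Finset (ofNat (List ℕ) k) 0) :=
    ofNat_of_decode rfl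
  rw [h2]
  simp [Denumerable.raise'Finset, Finset.mem_map, eqv]
  exact Iff.rfl

theorem mem_myRaise_fenc (F : Finset ℕ) (a : ℕ) :
    a ∈ myRaise (ofNat (List ℕ) (fenc F)) ↔ a ∈ F := by
  rw [myRaise_eq, ← mem_ofNat_finset, ofNat_fenc]

/-- The enumeration of the set of Horn clauses. -/
def henum (f : ℕ × ℕ → Option (Finset ℕ)) (c : ℕ) : Option (List ℕ) :=
  (f (c.unpair.2.unpair.1, c.unpair.2.unpair.2)).map
    (fun F => c.unpair.1 :: c.unpair.2.unpair.1 :: myRaise (ofNat (List ℕ) (fenc F)))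

theorem computable_henum {f : ℕ × ℕ → Option (Finset ℕ)} (hf : Computable f) :
    Computable (henum f) := by
  have u1 : Computable fun c : ℕ => c.unpair.1 := (Primrec.fst.comp Primrec.unpair).to_comp
  have u2 : Computable fun c : ℕ => c.unpair.2 := (Primrec.snd.comp Primrec.unpair).to_comp
  have ux : Computable fun c : ℕ => c.unpair.2.unpair.1 :=
    (Primrec.fst.comp Primrec.unpair).to_comp.comp u2
  have un : Computable fun c : ℕ => c.unpair.2.unpair.2 :=
    (Primrec.snd.comp Primrec.unpair).to_comp.comp u2
  have hfc : Computable fun c : ℕ => f (c.unpair.2.unpair.1, c.unpair.2.unpair.2) :=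
    hf.comp (ux.pair un)
  have hlist : Computable₂ fun (c : ℕ) (F : Finset ℕ) =>
      c.unpair.1 :: c.unpair.2.unpair.1 :: myRaise (ofNat (List ℕ) (fenc F)) := by
    have hr : Computable fun (p : ℕ × Finset ℕ) => myRaise (ofNat (List ℕ) (fenc p.2)) :=
      (primrec_myRaise.to_comp.comp ((Computable.ofNat (List ℕ)).comp
        (computable_fenc.comp Computable.snd)))
    exact Computable.list_cons.comp (u1.comp Computable.fst)
      (Computable.list_cons.comp (ux.comp Computable.fst) hr)
  exact Computable.option_map hfc hlist

theorem rePred_henum {f : ℕ × ℕ → Option (Finset ℕ)} (hf : Computable f) :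
    REPred fun l : List ℕ => ∃ c : ℕ, henum f c = some l := by
  have hp : Computable₂ fun (l : List ℕ) (c : ℕ) => decide (henum f c = some l) :=
    (Primrec.eq.decide.to_comp.comp ((computable_henum hf).comp Computable.snd)
      (Computable.option_some.comp Computable.fst)).to₂
  have hr : Partrec fun l : List ℕ =>
      Nat.rfind fun c => Part.some (decide (henum f c = some l)) :=
    Partrec.rfind (hp.partrec₂)
  exact hr.dom_re.of_eq fun l => by
    refine Iff.trans Nat.rfind_dom ?_
    constructor
    · rintro ⟨n, hn, -⟩
      exact ⟨n, of_decide_eq_true (Part.mem_some_iff.1 hn).symm⟩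
    · rintro ⟨n, hn⟩
      exact ⟨n, Part.mem_some_iff.2 (decide_eq_true hn).symm, fun {_} _ => trivial⟩

end MaxQVAux

open MaxQVAux in
/-- Converse: if `Aᶜ ≤ₑ A` then `A` is maximal in some r.e. quasivariety. -/
theorem maximal_of_compl_enumRed (A : Set ℕ) (h : EnumRed Aᶜ A) :
    ∃ S : Set (List ℕ), (∀ l ∈ S, l ≠ []) ∧ REPred (· ∈ S) ∧
      A ∈ QV S ∧ QVMaximal S A := by
  obtain ⟨f, hf, hiff⟩ := h
  refine ⟨{l | ∃ c : ℕ, henum f c = some l}, ?_, rePred_henum hf, ?_, ?_⟩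
  · rintro l ⟨c, hc⟩
    obtain ⟨F, -, rfl⟩ := Option.map_eq_some_iff.1 hc
    simp
  · -- A ∈ QV S
    rintro n₀ t ⟨c, hc⟩ hmem
    obtain ⟨F, hF, heq⟩ := Option.map_eq_some_iff.1 hc
    obtain ⟨h1, h2⟩ := List.cons.inj heq
    subst h1
    exfalso
    have hx : c.unpair.2.unpair.1 ∈ Aᶜ := by
      refine (hiff _).2 ⟨c.unpair.2.unpair.2, F, hF, ?_⟩
      intro a ha
      have : a ∈ myRaise (Denumerable.ofNat (List ℕ) (fenc F)) :=
        (mem_myRaise_fenc F a).2 ha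
      exact hmem a (h2 ▸ List.mem_cons_of_mem _ this)
    exact hx (hmem _ (h2 ▸ List.mem_cons_self))
  · -- maximality
    constructor
    · rintro n₀ t ⟨c, hc⟩ hmem
      obtain ⟨F, hF, heq⟩ := Option.map_eq_some_iff.1 hc
      obtain ⟨h1, h2⟩ := List.cons.inj heq
      subst h1
      exfalso
      have hx : c.unpair.2.unpair.1 ∈ Aᶜ := by
        refine (hiff _).2 ⟨c.unpair.2.unpair.2, F, hF, ?_⟩
        intro a ha
        have : a ∈ myRaise (Denumerable.ofNat (List ℕ) (fenc F)) :=
          (mem_myRaise_fenc F a).2 ha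
        exact hmem a (h2 ▸ List.mem_cons_of_mem _ this)
      exact hx (hmem _ (h2 ▸ List.mem_cons_self))
    · intro Z hZ hAZ
      by_cases hZA : Z = A
      · exact Or.inl hZA
      · refine Or.inr (Set.eq_univ_iff_forall.2 fun m => ?_)
        obtain ⟨x, hxZ, hxA⟩ : ∃ x, x ∈ Z ∧ x ∉ A := by
          by_contra hcon
          push_neg at hcon
          exact hZA (Set.Subset.antisymm hcon hAZ)
        obtain ⟨n, F, hFeq, hFA⟩ := (hiff x).1 hxA
        refine hZ m (x :: myRaise (Denumerable.ofNat (List ℕ) (fenc F)))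
          ⟨Nat.pair m (Nat.pair x n), ?_⟩ ?_
        · simp [henum, Nat.unpair_pair, hFeq]
        · intro a ha
          rcases List.mem_cons.1 ha with rfl | ha
          · exact hxZ
          · exact hAZ (hFA ((mem_myRaise_fenc F a).1 ha))
end
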